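/- arXiv:2503.01503 — 2 statements merged into one kernel-verified Lean document; each statement's English description precedes it below -/
import Mathlib

section
/- The characteristic function φ_Z of Z satisfies, for every θ ∈ ℝ, the functional equation φ_Z(θ) = e^{i(1+Λ²)θ} · p↓ / (1 − p↑ φ_Z(Λ² θ)). -/
open MeasureTheory Filter Finset

/-- The law of the level Markov chain on `ℕ` which, from state `0`, moves to `1` with
probability `puu` and stays at `0` with probability `1 - puu`, and from a state `j > 0`,
moves to `j+1` with probability `pu`, to `j-1` with probability `pd`, and stays at `j`
with probability `1 - pu - pd`; with initial distribution `ν`.  The law is characterized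
by its finite-dimensional distributions. -/
def IsLevelChainLaw (puu pu pd : ℝ) (ν : Measure ℕ) (P : Measure (ℕ → ℕ)) : Prop :=
  ∀ (n : ℕ) (a : ℕ → ℕ),
    P {ω | ∀ i ≤ n, ω i = a i} =
      ν {a 0} * ENNReal.ofReal (∏ i ∈ Finset.range n,
        (if a i = 0 then (if a (i + 1) = 1 then puu else if a (i + 1) = 0 then 1 - puu else 0)
         else if a (i + 1) = a i + 1 then pu
         else if a (i + 1) + 1 = a i then pd
         else if a (i + 1) = a i then 1 - pu - pd
         else 0))

/-- First return time of the path `ω` to level `0`. -/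
noncomputable def tau0 (ω : ℕ → ℕ) : ℕ := sInf {j | 1 ≤ j ∧ ω j = 0}

/-- `Z := Σ_{j=0}^{τ₀−1} Λ^{2 L_j}`. -/
noncomputable def Zvar (Λ : ℝ) (ω : ℕ → ℕ) : ℝ :=
  ∑ j ∈ Finset.range (tau0 ω), Λ ^ (2 * ω j)

/-- The characteristic function `φ_Z(θ) = E₀[e^{iθZ}]` of `Z` under the law `P0`. -/
noncomputable def phiZ (Λ : ℝ) (P0 : Measure (ℕ → ℕ)) (θ : ℝ) : ℂ :=
  ∫ ω, Complex.exp (Complex.I * (θ : ℂ) * ((Zvar Λ ω : ℝ) : ℂ)) ∂P0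


namespace ExcAux

/-- Excursion paths of the level chain, coded as binary trees. -/
inductive Exc : Type
  | down : Exc
  | up : Exc → Exc → Exc

namespace Exc

def len : Exc → ℕ
  | down => 2
  | up b c => len b + len c

def path : Exc → ℕ → ℕ
  | down, i => if i = 1 then 1 else 0
  | up b c, i => if i = 0 then 0 else if i ≤ 1 + len b then path b (i - 1) + 1
      else path c (i - len b)

def wt (pu pd : ℝ) : Exc → ℝ
  | down => pd
  | up b c => pu * wt pu pd b * wt pu pd c

def zv (Λ : ℝ) : Exc → ℝ
  | down => 1 + Λ ^ 2
  | up b c => Λ ^ 2 * zv Λ b + zv Λ c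

theorem two_le_len (e : Exc) : 2 ≤ e.len := by
  induction e with
  | down => exact le_refl _
  | up b c ihb ihc => simp only [len]; omega

theorem path_zero (e : Exc) : e.path 0 = 0 := by
  cases e <;> simp [path]

theorem path_one (e : Exc) : e.path 1 = 1 := by
  cases e with
  | down => simp [path]
  | up b c => simp [path, path_zero, two_le_len]

theorem path_len (e : Exc) : e.path e.len = 0 := by
  induction e with
  | down => simp [len, path]
  | up b c ihb ihc =>
    have hb := two_le_len b; have hc := two_le_len c
    have h1 : ¬ (len b + len c ≤ 1 + len b) := by omega
    simp [len, path, h1, show ¬ (len b + len c = 0) by omega, ihc]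

theorem path_pos (e : Exc) {i : ℕ} (h1 : 0 < i) (h2 : i < e.len) : 0 < e.path i := by
  induction e generalizing i with
  | down =>
    have h3 : i = 1 := by simp only [len] at h2; omega
    simp [h3, path]
  | up b c ihb ihc =>
    have hb := two_le_len b; have hc := two_le_len c
    simp only [len] at h2
    by_cases hle : i ≤ 1 + len b
    · simp only [path]
      rw [if_neg (by omega : ¬ i = 0), if_pos hle]
      omega
    · simp only [path]
      rw [if_neg (by omega : ¬ i = 0), if_neg hle]
      exact ihc (by omega) (by omega)

/-- On indices `≥ 1 + len b`, the path of `up b c` is given by the `c`-part. -/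
theorem path_up_c (b c : Exc) {i : ℕ} (h : 1 + b.len ≤ i) :
    (up b c).path i = c.path (i - b.len) := by
  rcases eq_or_lt_of_le h with h' | h'
  · simp only [path]
    rw [if_neg (by omega : ¬ i = 0), if_pos (by omega : i ≤ 1 + b.len),
      show i - 1 = b.len by omega, path_len, show i - b.len = 1 by omega, path_one]
  · simp only [path]
    rw [if_neg (by omega : ¬ i = 0), if_neg (by omega : ¬ i ≤ 1 + b.len)]

theorem path_up_b (b c : Exc) {i : ℕ} (h0 : 0 < i) (h : i ≤ 1 + b.len) :
    (up b c).path i = b.path (i - 1) + 1 := by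
  simp only [path]
  rw [if_neg (by omega : ¬ i = 0), if_pos h]

/-- Between indices `2` and `len b`, the path of `up b c` stays `≥ 2`. -/
theorem path_up_ge_two (b c : Exc) {i : ℕ} (h0 : 2 ≤ i) (h : i ≤ b.len) :
    2 ≤ (up b c).path i := by
  rw [path_up_b b c (by omega) (by omega)]
  have := path_pos b (i := i - 1) (by omega) (by omega)
  omega

theorem path_up_at_blen_succ (b c : Exc) : (up b c).path (1 + b.len) = 1 := by
  rw [path_up_c b c (le_refl _), show 1 + b.len - b.len = 1 by omega, path_one]

/-- An excursion is determined by its length and its path values up to its length. -/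
theorem exc_inj : ∀ e e' : Exc, e.len = e'.len →
    (∀ i ≤ e.len, e.path i = e'.path i) → e = e' := by
  intro e
  induction e with
  | down =>
    intro e' hlen _
    cases e' with
    | down => rfl
    | up b' c' =>
      exfalso
      have := two_le_len b'; have := two_le_len c'
      simp only [len] at hlen; omega
  | up b c ihb ihc =>
    intro e' hlen hpath
    cases e' with
    | down =>
      exfalso
      have := two_le_len b; have := two_le_len c
      simp only [len] at hlen; omega
    | up b' c' =>
      have hb := two_le_len b; have hc := two_le_len c
      have hb' := two_le_len b'; have hc' := two_le_len c'
      simp only [len] at hlen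
      -- first, the lengths of the `b`-parts agree
      have hbb : b.len = b'.len := by
        by_contra hne
        rcases Nat.lt_or_ge b.len b'.len with h | h
        · have h1 : (up b c).path (1 + b.len) = 1 := path_up_at_blen_succ b c
          have h2 : 2 ≤ (up b' c').path (1 + b.len) :=
            path_up_ge_two b' c' (by omega) (by omega)
          have := hpath (1 + b.len) (by simp only [len]; omega)
          omega
        · have h : b'.len < b.len := by omega
          have h1 : (up b' c').path (1 + b'.len) = 1 := path_up_at_blen_succ b' c'
          have h2 : 2 ≤ (up b c).path (1 + b'.len) :=
            path_up_ge_two b c (by omega) (by omega)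
          have := hpath (1 + b'.len) (by simp only [len]; omega)
          omega
      have hcc : c.len = c'.len := by omega
      have hbeq : b = b' := by
        refine ihb b' hbb fun i hi => ?_
        rcases Nat.eq_zero_or_pos i with rfl | hi0
        · rw [path_zero, path_zero]
        · have h1 := path_up_b b c (i := i + 1) (by omega) (by omega)
          have h2 := path_up_b b' c' (i := i + 1) (by omega) (by omega)
          have h3 := hpath (i + 1) (by simp only [len]; omega)
          rw [h1, h2] at h3
          simpa using h3
      have hceq : c = c' := by
        refine ihc c' hcc fun i hi => ?_
        rcases Nat.eq_zero_or_pos i with rfl | hi0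
        · rw [path_zero, path_zero]
        · have h1 := path_up_c b c (i := i + b.len) (by omega)
          have h2 := path_up_c b' c' (i := i + b'.len) (by omega)
          have h3 := hpath (i + b.len) (by simp only [len]; omega)
          rw [show i + b'.len = i + b.len by omega] at h2
          rw [h1, h2] at h3
          rw [show i + b.len - b.len = i by omega, show i + b.len - b'.len = i by omega] at h3
          exact h3
      rw [hbeq, hceq]

/-- Transition weight of the level chain (with `puu = 1`). -/
def stepw (pu pd : ℝ) (x y : ℕ) : ℝ :=
  if x = 0 then (if y = 1 then 1 else if y = 0 then 1 - 1 else 0)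
  else if y = x + 1 then pu else if y + 1 = x then pd else if y = x then 1 - pu - pd else 0

theorem stepw_shift (pu pd : ℝ) {x : ℕ} (y : ℕ) (hx : 0 < x) :
    stepw pu pd (x + 1) (y + 1) = stepw pu pd x y := by
  simp only [stepw, if_neg (by omega : ¬ x + 1 = 0), if_neg (by omega : ¬ x = 0)]
  have h1 : (y + 1 = x + 1 + 1) ↔ (y = x + 1) := by omega
  have h2 : (y + 1 + 1 = x + 1) ↔ (y + 1 = x) := by omega
  have h3 : (y + 1 = x + 1) ↔ (y = x) := by omega
  simp only [h1, h2, h3]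

theorem stepw_zero_one (pu pd : ℝ) : stepw pu pd 0 1 = 1 := by simp [stepw]

theorem prod_stepw (pu pd : ℝ) (e : Exc) :
    ∏ i ∈ Finset.range e.len, stepw pu pd (e.path i) (e.path (i + 1)) = wt pu pd e := by
  induction e with
  | down => simp [len, path, wt, Finset.prod_range_succ, stepw]
  | up b c ihb ihc =>
    have hb := two_le_len b; have hc := two_le_len c
    have hlen : (up b c).len = (1 + b.len) + (c.len - 1) := by simp only [len]; omega
    rw [hlen, Finset.prod_range_add]
    have part1 : (∏ i ∈ Finset.range (1 + b.len),
        stepw pu pd ((up b c).path i) ((up b c).path (i + 1))) = pu * wt pu pd b := by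
      rw [show 1 + b.len = b.len + 1 by omega, Finset.prod_range_succ',
        path_zero, path_one, stepw_zero_one, mul_one]
      have hshift : ∀ i < b.len, stepw pu pd ((up b c).path (i + 1)) ((up b c).path (i + 1 + 1))
          = stepw pu pd (b.path i + 1) (b.path (i + 1) + 1) := by
        intro i hi
        rw [path_up_b b c (by omega) (by omega), path_up_b b c (by omega) (by omega)]
        congr 1 <;> simp
      rw [Finset.prod_congr rfl fun i hi => hshift i (Finset.mem_range.mp hi)]
      have h := ihb
      rw [show b.len = (b.len - 1) + 1 by omega, Finset.prod_range_succ',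
        path_zero, path_one, stepw_zero_one, mul_one] at h
      rw [show b.len = (b.len - 1) + 1 by omega, Finset.prod_range_succ',
        path_zero, path_one]
      have h2 : stepw pu pd (0 + 1) (1 + 1) = pu := by norm_num [stepw]
      rw [h2, ← h, mul_comm]
      congr 1
      refine Finset.prod_congr rfl fun i hi => ?_
      have hi' := Finset.mem_range.mp hi
      exact stepw_shift pu pd _ (path_pos b (by omega) (by omega))
    have part2 : (∏ i ∈ Finset.range (c.len - 1),
        stepw pu pd ((up b c).path (1 + b.len + i)) ((up b c).path (1 + b.len + i + 1)))
        = wt pu pd c := by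
      have hre : ∀ i < c.len - 1, stepw pu pd ((up b c).path (1 + b.len + i))
          ((up b c).path (1 + b.len + i + 1)) = stepw pu pd (c.path (i + 1)) (c.path (i + 1 + 1)) := by
        intro i hi
        rw [path_up_c b c (by omega), path_up_c b c (by omega),
          show 1 + b.len + i - b.len = i + 1 by omega,
          show 1 + b.len + i + 1 - b.len = i + 1 + 1 by omega]
      rw [Finset.prod_congr rfl fun i hi => hre i (Finset.mem_range.mp hi)]
      have h := ihc
      rw [show c.len = (c.len - 1) + 1 by omega, Finset.prod_range_succ',
        path_zero, path_one, stepw_zero_one, mul_one] at h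
      rw [h]
    rw [part1, part2]; rfl

theorem sum_pow_path (Λ : ℝ) (e : Exc) :
    ∑ j ∈ Finset.range e.len, Λ ^ (2 * e.path j) = zv Λ e := by
  induction e with
  | down =>
    simp [len, path, zv, Finset.sum_range_succ]
    try ring
  | up b c ihb ihc =>
    have hb := two_le_len b; have hc := two_le_len c
    have hlen : (up b c).len = (1 + b.len) + (c.len - 1) := by simp only [len]; omega
    rw [hlen, Finset.sum_range_add]
    have part1 : (∑ j ∈ Finset.range (1 + b.len), Λ ^ (2 * (up b c).path j))
        = 1 + Λ ^ 2 * zv Λ b := by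
      rw [show 1 + b.len = b.len + 1 by omega, Finset.sum_range_succ', path_zero, pow_zero]
      have hre : ∀ i < b.len, Λ ^ (2 * (up b c).path (i + 1)) = Λ ^ 2 * Λ ^ (2 * b.path i) := by
        intro i hi
        rw [path_up_b b c (by omega) (by omega), Nat.add_sub_cancel,
          show 2 * (b.path i + 1) = 2 + 2 * b.path i by ring, pow_add]
      rw [Finset.sum_congr rfl fun i hi => hre i (Finset.mem_range.mp hi),
        ← Finset.mul_sum, ihb]
      ring
    have part2 : (∑ j ∈ Finset.range (c.len - 1), Λ ^ (2 * (up b c).path (1 + b.len + j)))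
        = zv Λ c - 1 := by
      have hre : ∀ i < c.len - 1, Λ ^ (2 * (up b c).path (1 + b.len + i))
          = Λ ^ (2 * c.path (i + 1)) := by
        intro i hi
        rw [path_up_c b c (by omega), show 1 + b.len + i - b.len = i + 1 by omega]
      rw [Finset.sum_congr rfl fun i hi => hre i (Finset.mem_range.mp hi)]
      have := ihc
      rw [show c.len = (c.len - 1) + 1 by omega, Finset.sum_range_succ', path_zero, pow_zero] at this
      linarith
    rw [part1, part2]
    show _ = Λ ^ 2 * zv Λ b + zv Λ c
    ring

theorem wt_pos {pu pd : ℝ} (hpu : 0 < pu) (hpd : 0 < pd) (e : Exc) : 0 < wt pu pd e := by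
  induction e with
  | down => exact hpd
  | up b c ihb ihc => exact mul_pos (mul_pos hpu ihb) ihc

def enc : Exc → ℕ
  | down => 0
  | up b c => Nat.pair (enc b) (enc c) + 1

theorem enc_inj : Function.Injective enc := by
  intro e
  induction e with
  | down => intro e' h; cases e' with
    | down => rfl
    | up b' c' => simp [enc] at h
  | up b c ihb ihc => intro e' h; cases e' with
    | down => simp [enc] at h
    | up b' c' =>
      simp only [enc, Nat.add_right_cancel_iff, Nat.pair_eq_pair] at h
      rw [ihb h.1, ihc h.2]

instance : Countable Exc := ⟨⟨enc, enc_inj⟩⟩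

end Exc
end ExcAux

namespace ExcAux
namespace Exc

open MeasureTheory

/-- The cylinder event determined by an excursion. -/
def Cyl (e : Exc) : Set (ℕ → ℕ) := {ω | ∀ i ≤ e.len, ω i = e.path i}

theorem measurableSet_Cyl (e : Exc) : MeasurableSet (Cyl e) := by
  have h : Cyl e = ⋂ i ∈ Set.Iic e.len, (fun ω : ℕ → ℕ => ω i) ⁻¹' {e.path i} := by
    ext ω
    simp [Cyl, Set.mem_iInter]
  rw [h]
  exact MeasurableSet.biInter (Set.to_countable _) fun i _ =>
    (measurable_pi_apply i) (measurableSet_singleton _)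

theorem eq_of_mem_Cyl {e e' : Exc} {ω : ℕ → ℕ} (h : ω ∈ Cyl e) (h' : ω ∈ Cyl e') : e = e' := by
  wlog hle : e.len ≤ e'.len generalizing e e' with H
  · exact (H h' h (le_of_not_ge hle)).symm
  have hpath : ∀ i ≤ e.len, e.path i = e'.path i := fun i hi => by
    rw [← h i hi, h' i (le_trans hi hle)]
  rcases eq_or_lt_of_le hle with heq | hlt
  · exact exc_inj e e' heq hpath
  · exfalso
    have h0 : e'.path e.len = 0 := by rw [← hpath e.len le_rfl, path_len]
    have h2 := path_pos e' (i := e.len) (by have := two_le_len e; omega) hlt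
    omega

theorem disjoint_Cyl : Pairwise (Function.onFun Disjoint Cyl) := by
  intro e e' hne
  rw [Function.onFun, Set.disjoint_left]
  intro ω h h'
  exact hne (eq_of_mem_Cyl h h')

theorem tau0_of_mem_Cyl {e : Exc} {ω : ℕ → ℕ} (h : ω ∈ Cyl e) : tau0 ω = e.len := by
  have hmem : e.len ∈ {j | 1 ≤ j ∧ ω j = 0} :=
    ⟨by have := two_le_len e; omega, by rw [h e.len le_rfl, path_len]⟩
  refine le_antisymm (Nat.sInf_le hmem) (le_csInf ⟨_, hmem⟩ ?_)
  intro j hj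
  by_contra hlt
  push_neg at hlt
  obtain ⟨hj1, hj0⟩ := hj
  rw [h j (by omega)] at hj0
  have := path_pos e (i := j) (by omega) (by omega)
  omega

theorem Zvar_of_mem_Cyl (Λ : ℝ) {e : Exc} {ω : ℕ → ℕ} (h : ω ∈ Cyl e) :
    Zvar Λ ω = zv Λ e := by
  rw [Zvar, tau0_of_mem_Cyl h, ← sum_pow_path Λ e]
  refine Finset.sum_congr rfl fun j hj => ?_
  rw [h j (le_of_lt (Finset.mem_range.mp hj))]

theorem prob_Cyl {pu pd : ℝ} {P0 : Measure (ℕ → ℕ)}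
    (hP0 : IsLevelChainLaw 1 pu pd (Measure.dirac 0) P0) (e : Exc) :
    P0 (Cyl e) = ENNReal.ofReal (wt pu pd e) := by
  have h : P0 (Cyl e) = (Measure.dirac 0 : Measure ℕ) {e.path 0} * ENNReal.ofReal
      (∏ i ∈ Finset.range e.len, stepw pu pd (e.path i) (e.path (i + 1))) :=
    hP0 e.len e.path
  have hd : (Measure.dirac (0:ℕ) : Measure ℕ) {e.path 0} = 1 := by
    rw [path_zero]
    simp
  rw [h, hd, one_mul, prod_stepw]

theorem measurable_tau0 : Measurable tau0 := by
  apply measurable_to_countable'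
  intro n
  match n with
  | 0 =>
    have h : tau0 ⁻¹' {0} = ⋂ j : ℕ, ((fun ω : ℕ → ℕ => ω (j+1)) ⁻¹' {0})ᶜ := by
      ext ω
      simp only [Set.mem_preimage, Set.mem_singleton_iff, Set.mem_iInter, Set.mem_compl_iff,
        tau0]
      constructor
      · intro h0 j hj
        rcases Nat.sInf_eq_zero.mp h0 with hc | hc
        · exact absurd hc.1 (by omega)
        · have : (j+1) ∈ ({j | 1 ≤ j ∧ ω j = 0} : Set ℕ) := ⟨by omega, hj⟩
          rw [hc] at this
          exact this
      · intro hj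
        have : ({j | 1 ≤ j ∧ ω j = 0} : Set ℕ) = ∅ := by
          ext k
          simp only [Set.mem_setOf_eq, Set.mem_empty_iff_false, iff_false]
          rintro ⟨hk1, hk0⟩
          exact hj (k - 1) (by rw [show k - 1 + 1 = k by omega]; exact hk0)
        rw [this, Nat.sInf_empty]
    rw [h]
    exact MeasurableSet.iInter fun j =>
      ((measurable_pi_apply (j+1)) (measurableSet_singleton 0)).compl
  | (m+1) =>
    have h : tau0 ⁻¹' {m+1} = ((fun ω : ℕ → ℕ => ω (m+1)) ⁻¹' {0}) ∩
        ⋂ j : ℕ, {ω : ℕ → ℕ | ¬(1 ≤ j ∧ j ≤ m ∧ ω j = 0)} := by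
      ext ω
      simp only [Set.mem_preimage, Set.mem_singleton_iff, Set.mem_inter_iff, Set.mem_iInter,
        Set.mem_setOf_eq, tau0]
      constructor
      · intro h0
        have hne : ({j | 1 ≤ j ∧ ω j = 0} : Set ℕ).Nonempty := by
          by_contra hc
          rw [Set.not_nonempty_iff_eq_empty] at hc
          rw [hc, Nat.sInf_empty] at h0
          omega
        have hmem := Nat.sInf_mem hne
        rw [h0] at hmem
        refine ⟨hmem.2, fun j => ?_⟩
        rintro ⟨hj1, hjm, hj0⟩
        have := Nat.sInf_le (show j ∈ {j | 1 ≤ j ∧ ω j = 0} from ⟨hj1, hj0⟩)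
        omega
      · rintro ⟨h1, h2⟩
        have hmem : (m+1) ∈ {j | 1 ≤ j ∧ ω j = 0} := ⟨by omega, h1⟩
        refine le_antisymm (Nat.sInf_le hmem) (le_csInf ⟨_, hmem⟩ ?_)
        rintro b ⟨hb1, hb0⟩
        by_contra hb
        exact h2 b ⟨hb1, by omega, hb0⟩
    rw [h]
    refine MeasurableSet.inter ((measurable_pi_apply (m+1)) (measurableSet_singleton 0))
      (MeasurableSet.iInter fun j => ?_)
    by_cases hj : 1 ≤ j ∧ j ≤ m
    · have : {ω : ℕ → ℕ | ¬(1 ≤ j ∧ j ≤ m ∧ ω j = 0)} =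
          ((fun ω : ℕ → ℕ => ω j) ⁻¹' {0})ᶜ := by
        ext ω
        simp [hj.1, hj.2]
      rw [this]
      exact ((measurable_pi_apply j) (measurableSet_singleton 0)).compl
    · have : {ω : ℕ → ℕ | ¬(1 ≤ j ∧ j ≤ m ∧ ω j = 0)} = Set.univ := by
        ext ω
        simp only [Set.mem_setOf_eq, Set.mem_univ, iff_true]
        rintro ⟨hj1, hjm, _⟩
        exact hj ⟨hj1, hjm⟩
      rw [this]
      exact MeasurableSet.univ

theorem measurable_Zvar (Λ : ℝ) : Measurable (Zvar Λ) := by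
  have hg : Measurable (fun p : (ℕ → ℕ) × ℕ => ∑ j ∈ Finset.range p.2, Λ ^ (2 * p.1 j)) := by
    apply measurable_from_prod_countable_left
    intro n
    show Measurable fun x : ℕ → ℕ => ∑ j ∈ Finset.range n, Λ ^ (2 * x j)
    apply Finset.measurable_sum
    intro j _
    exact (measurable_of_countable (fun k : ℕ => Λ ^ (2 * k))).comp (measurable_pi_apply j)
  exact hg.comp (measurable_id.prodMk measurable_tau0)

/-- The summand of the characteristic-function series. -/
noncomputable def g (Λ pu pd t : ℝ) (e : Exc) : ℂ :=
  ((wt pu pd e : ℝ) : ℂ) * Complex.exp (Complex.I * (t : ℂ) * ((zv Λ e : ℝ) : ℂ))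

theorem norm_g (Λ pu pd : ℝ) (hpu : 0 < pu) (hpd : 0 < pd) (t : ℝ) (e : Exc) :
    ‖g Λ pu pd t e‖ = wt pu pd e := by
  rw [g, norm_mul, Complex.norm_exp]
  have h1 : (Complex.I * (t : ℂ) * ((zv Λ e : ℝ) : ℂ)).re = 0 := by simp
  rw [h1, Real.exp_zero, mul_one, Complex.norm_real, Real.norm_eq_abs, abs_of_pos (wt_pos hpu hpd e)]

theorem summable_norm_g (Λ pu pd : ℝ) (hpu : 0 < pu) (hpd : 0 < pd) (t : ℝ)
    (hw : Summable (wt pu pd)) : Summable fun e => ‖g Λ pu pd t e‖ := by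
  have : (fun e => ‖g Λ pu pd t e‖) = wt pu pd := funext (norm_g Λ pu pd hpu hpd t)
  rw [this]
  exact hw

theorem summable_g (Λ pu pd : ℝ) (hpu : 0 < pu) (hpd : 0 < pd) (t : ℝ)
    (hw : Summable (wt pu pd)) : Summable (g Λ pu pd t) :=
  (summable_norm_g Λ pu pd hpu hpd t hw).of_norm

theorem g_up (Λ pu pd t : ℝ) (b c : Exc) :
    g Λ pu pd t (up b c) = (pu : ℂ) * (g Λ pu pd (Λ^2 * t) b * g Λ pu pd t c) := by
  simp only [g, wt, zv]
  rw [show Complex.I * (t : ℂ) * (((Λ^2 * zv Λ b + zv Λ c : ℝ) : ℝ) : ℂ)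
      = Complex.I * ((Λ^2 * t : ℝ) : ℂ) * ((zv Λ b : ℝ) : ℂ)
        + Complex.I * (t : ℂ) * ((zv Λ c : ℝ) : ℂ) by push_cast; ring,
    Complex.exp_add]
  push_cast
  ring

/-- The key splitting identity for the excursion series. -/
theorem tsum_g_split (Λ pu pd : ℝ) (hpu : 0 < pu) (hpd : 0 < pd) (t : ℝ)
    (hw : Summable (wt pu pd)) :
    (∑' e, g Λ pu pd t e) = (pd : ℂ) * Complex.exp (Complex.I * (t : ℂ) * ((1 + Λ^2 : ℝ) : ℂ))
      + (pu : ℂ) * (∑' e, g Λ pu pd (Λ^2 * t) e) * (∑' e, g Λ pu pd t e) := by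
  classical
  have h1 : (∑' e, g Λ pu pd t e) = g Λ pu pd t Exc.down
      + ∑' e, (if e = Exc.down then 0 else g Λ pu pd t e) :=
    Summable.tsum_eq_add_tsum_ite (summable_g Λ pu pd hpu hpd t hw) Exc.down
  have hdown : g Λ pu pd t Exc.down
      = (pd : ℂ) * Complex.exp (Complex.I * (t : ℂ) * ((1 + Λ^2 : ℝ) : ℂ)) := by
    simp only [g, wt, zv]
  have hinj : Function.Injective (fun p : Exc × Exc => up p.1 p.2) := by
    rintro ⟨b, c⟩ ⟨b', c'⟩ h
    simp only [up.injEq] at h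
    simp [h.1, h.2]
  have hsupp : Function.support (fun e => if e = Exc.down then 0 else g Λ pu pd t e)
      ⊆ Set.range (fun p : Exc × Exc => up p.1 p.2) := by
    intro e he
    rcases e with _ | ⟨b, c⟩
    · simp [Function.mem_support] at he
    · exact ⟨(b, c), rfl⟩
  have h2 : (∑' e, (if e = Exc.down then 0 else g Λ pu pd t e))
      = (pu : ℂ) * ((∑' e, g Λ pu pd (Λ^2 * t) e) * (∑' e, g Λ pu pd t e)) := by
    rw [← Function.Injective.tsum_eq hinj hsupp]
    have hre : ∀ p : Exc × Exc, (if (up p.1 p.2) = Exc.down then 0 else g Λ pu pd t (up p.1 p.2))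
        = (pu : ℂ) * (g Λ pu pd (Λ^2 * t) p.1 * g Λ pu pd t p.2) := by
      intro p
      rw [if_neg (by intro h; exact Exc.noConfusion h), g_up]
    rw [tsum_congr hre, tsum_mul_left]
    congr 1
    exact (tsum_mul_tsum_of_summable_norm
      (summable_norm_g Λ pu pd hpu hpd (Λ^2 * t) hw) (summable_norm_g Λ pu pd hpu hpd t hw)).symm
  conv_lhs => rw [h1]
  rw [h2, hdown]
  ring

end Exc
end ExcAux

/-- The characteristic function `φ_Z` of `Z` satisfies, for every `θ ∈ ℝ`,
the functional equation `φ_Z(θ) = e^{i(1+Λ²)θ} · p↓ / (1 − p↑ φ_Z(Λ² θ))`. -/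
theorem phiZ_functional_equation (Λ pu pd : ℝ) (hΛ : 1 < Λ)
    (hpu : 0 < pu) (hpd : 0 < pd) (hpu1 : pu < 1) (hpd1 : pd < 1) (hsum : pu + pd = 1)
    (hratio1 : 1 < pd / pu) (hratio2 : pd / pu < Λ ^ 2)
    (P0 : Measure (ℕ → ℕ)) [IsProbabilityMeasure P0]
    (hP0 : IsLevelChainLaw 1 pu pd (Measure.dirac 0) P0) :
    ∀ θ : ℝ, phiZ Λ P0 θ =
      Complex.exp (Complex.I * (((1 + Λ ^ 2) * θ : ℝ) : ℂ)) * (pd : ℂ) /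
        (1 - (pu : ℂ) * phiZ Λ P0 (Λ ^ 2 * θ)) := by
  classical
  open ExcAux ExcAux.Exc in
  -- measures of the cylinder events
  have hPC : ∀ e : Exc, P0 (Cyl e) = ENNReal.ofReal (wt pu pd e) := prob_Cyl hP0
  have hmeas : ∀ e : Exc, MeasurableSet (Cyl e) := measurableSet_Cyl
  have hPU : P0 (⋃ e : Exc, Cyl e) = ∑' e : Exc, ENNReal.ofReal (wt pu pd e) := by
    rw [measure_iUnion disjoint_Cyl hmeas]
    exact tsum_congr hPC
  have hfin : (∑' e : Exc, ENNReal.ofReal (wt pu pd e)) ≠ ⊤ := by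
    rw [← hPU]
    exact measure_ne_top P0 _
  have hw : Summable (wt pu pd) := by
    have h := ENNReal.summable_toReal hfin
    refine h.congr fun e => ?_
    exact ENNReal.toReal_ofReal (wt_pos hpu hpd e).le
  set S : ℝ := ∑' e : Exc, wt pu pd e with hSdef
  have hSofReal : ENNReal.ofReal S = P0 (⋃ e : Exc, Cyl e) := by
    rw [hPU, hSdef, ENNReal.ofReal_tsum_of_nonneg (fun e => (wt_pos hpu hpd e).le) hw]
  have hSle : S ≤ 1 := by
    have h1 : ENNReal.ofReal S ≤ 1 := by
      rw [hSofReal]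
      exact prob_le_one
    exact (ENNReal.ofReal_le_one).mp h1
  -- the series identity at t = 0 shows S = 1
  have hG0 : (∑' e : Exc, g Λ pu pd 0 e) = (S : ℂ) := by
    rw [hSdef, Complex.ofReal_tsum]
    refine tsum_congr fun e => ?_
    simp [g]
  have hkey0 := tsum_g_split Λ pu pd hpu hpd 0 hw
  simp only [Complex.ofReal_zero, mul_zero, zero_mul, Complex.exp_zero, mul_one, hG0] at hkey0
  have hS1 : S = 1 := by
    have hre : S = pd + pu * S * S := by exact_mod_cast hkey0
    have hfac : (S - 1) * (pu * S - pd) = 0 := by linear_combination (-S) * hsum - hre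
    rcases mul_eq_zero.mp hfac with h | h
    · linarith
    · exfalso
      have hpupd : pu < pd := (one_lt_div hpu).mp hratio1
      nlinarith
  have hUc : P0 (⋃ e : Exc, Cyl e)ᶜ = 0 := by
    have hUm : MeasurableSet (⋃ e : Exc, Cyl e) := MeasurableSet.iUnion hmeas
    rw [prob_compl_eq_zero_iff₀ hUm.nullMeasurableSet, ← hSofReal, hS1]
    simp
  have hphi : ∀ t : ℝ, phiZ Λ P0 t = ∑' e : Exc, g Λ pu pd t e := by
    intro t
    have hfm : Measurable fun ω => Complex.exp (Complex.I * (t:ℂ) * ((Zvar Λ ω : ℝ) : ℂ)) := by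
      apply Complex.measurable_exp.comp
      exact (Complex.measurable_ofReal.comp (measurable_Zvar Λ)).const_mul _
    have hint : Integrable (fun ω => Complex.exp (Complex.I * (t:ℂ) * ((Zvar Λ ω : ℝ) : ℂ))) P0 := by
      refine Integrable.mono' (integrable_const 1) hfm.aestronglyMeasurable ?_
      refine Filter.Eventually.of_forall fun ω => ?_
      rw [Complex.norm_exp]
      have h1 : (Complex.I * (t:ℂ) * ((Zvar Λ ω : ℝ) : ℂ)).re = 0 := by simp
      rw [h1, Real.exp_zero]
    rw [phiZ]
    have hUm : MeasurableSet (⋃ e : Exc, Cyl e) := MeasurableSet.iUnion hmeas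
    have hzero : (∫ ω in (⋃ e : Exc, Cyl e)ᶜ,
        Complex.exp (Complex.I * (t:ℂ) * ((Zvar Λ ω : ℝ) : ℂ)) ∂P0) = 0 := by
      rw [Measure.restrict_eq_zero.mpr hUc]
      exact integral_zero_measure _
    rw [← integral_add_compl hUm hint, hzero, add_zero,
      integral_iUnion hmeas disjoint_Cyl hint.integrableOn]
    refine tsum_congr fun e => ?_
    have hconst : (∫ ω in Cyl e, Complex.exp (Complex.I * (t:ℂ) * ((Zvar Λ ω : ℝ) : ℂ)) ∂P0)
        = ∫ _ω in Cyl e, Complex.exp (Complex.I * (t:ℂ) * ((zv Λ e : ℝ) : ℂ)) ∂P0 := by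
      refine setIntegral_congr_fun (hmeas e) fun ω hω => ?_
      rw [Zvar_of_mem_Cyl Λ hω]
    rw [hconst, setIntegral_const, measureReal_def, hPC e, ENNReal.toReal_ofReal (wt_pos hpu hpd e).le, g,
      Complex.real_smul]
  intro θ
  have hkey := tsum_g_split Λ pu pd hpu hpd θ hw
  rw [← hphi θ, ← hphi (Λ^2 * θ)] at hkey
  have hnorm2 : ‖phiZ Λ P0 (Λ^2 * θ)‖ ≤ 1 := by
    rw [hphi]
    refine le_trans (norm_tsum_le_tsum_norm (summable_norm_g Λ pu pd hpu hpd _ hw)) ?_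
    have h2 : (∑' e : Exc, ‖g Λ pu pd (Λ^2*θ) e‖) = S := by
      rw [hSdef]
      exact tsum_congr (norm_g Λ pu pd hpu hpd _)
    rw [h2, hS1]
  have hden : (1 : ℂ) - (pu:ℂ) * phiZ Λ P0 (Λ^2 * θ) ≠ 0 := by
    intro h
    have h2 : (pu:ℂ) * phiZ Λ P0 (Λ^2*θ) = 1 := by linear_combination -h
    have h3 : ‖(pu:ℂ) * phiZ Λ P0 (Λ^2*θ)‖ = 1 := by rw [h2]; simp
    rw [norm_mul, Complex.norm_real, Real.norm_eq_abs, abs_of_pos hpu] at h3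
    nlinarith [hnorm2, norm_nonneg (phiZ Λ P0 (Λ^2*θ))]
  rw [eq_div_iff hden]
  have hE : Complex.exp (Complex.I * (θ:ℂ) * ((1 + Λ^2 : ℝ) : ℂ))
      = Complex.exp (Complex.I * (((1 + Λ ^ 2) * θ : ℝ) : ℂ)) := by
    congr 1
    push_cast
    ring
  rw [hE] at hkey
  linear_combination hkey
end

section
/- Let (Z_k)_{k≥1} be i.i.d. random variables distributed as Z under P₀, and let (a_n)_{n∈ℕ} be any sequence of positive reals with a_n → 0. Then (a_n² / n^{2/α}) Σ_{k=1}^n Z_k → 0 in P₀-probability, and (a_n² / n^{2/α}) V_n → 0 in P₀-probability, as n → ∞. -/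
open MeasureTheory Filter Finset Topology

open MeasureTheory Filter Finset

/-- `ℓ(θ) := (1 − φ_Z(θ)) / |θ|^{α/2}` for `θ ≠ 0`. -/
noncomputable def ellZ (Λ α : ℝ) (P0 : Measure (ℕ → ℕ)) (θ : ℝ) : ℂ :=
  (1 - phiZ Λ P0 θ) / ((|θ| ^ (α / 2) : ℝ) : ℂ)


/-- `V_n := Σ_{j=0}^{n−1} Λ^{2 L_j}`. -/
noncomputable def Vvar (Λ : ℝ) (n : ℕ) (ω : ℕ → ℕ) : ℝ :=
  ∑ j ∈ Finset.range n, Λ ^ (2 * ω j)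

namespace Exc

/-- one-step transition kernel of the level chain, as `ℝ≥0∞`. -/
noncomputable def Qk (pu pd : ℝ) (j k : ℕ) : ENNReal :=
  if j = 0 then (if k = 1 then 1 else 0)
  else if k = j + 1 then ENNReal.ofReal pu
  else if k + 1 = j then ENNReal.ofReal pd
  else 0

/-- real step factor, as appearing in `IsLevelChainLaw` with `puu = 1`. -/
noncomputable def rs (pu pd : ℝ) (x y : ℕ) : ℝ :=
  if x = 0 then (if y = 1 then (1:ℝ) else if y = 0 then 1 - 1 else 0)
  else if y = x + 1 then pu
  else if y + 1 = x then pd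
  else if y = x then 1 - pu - pd
  else 0

lemma rs_nonneg {pu pd : ℝ} (hpu : 0 ≤ pu) (hpd : 0 ≤ pd) (hsum : pu + pd = 1) (x y : ℕ) :
    0 ≤ rs pu pd x y := by
  unfold rs
  have : 1 - pu - pd = 0 := by linarith
  split_ifs <;> simp_all <;> linarith

lemma ofReal_rs {pu pd : ℝ} (hsum : pu + pd = 1) (x y : ℕ) :
    ENNReal.ofReal (rs pu pd x y) = Qk pu pd x y := by
  have h0 : 1 - pu - pd = 0 := by linarith
  unfold rs Qk
  split_ifs <;> simp_all

def cylE (n : ℕ) (a : ℕ → ℕ) : Set (ℕ → ℕ) := {ω | ∀ i ≤ n, ω i = a i}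

def ext {n : ℕ} (b : Fin (n+1) → ℕ) : ℕ → ℕ :=
  fun i => if h : i < n + 1 then b ⟨i, h⟩ else 0

lemma ext_val {n : ℕ} (b : Fin (n+1) → ℕ) (i : Fin (n+1)) : ext b i.val = b i := by
  unfold ext
  rw [dif_pos i.isLt]

lemma measurable_cylE (n : ℕ) (a : ℕ → ℕ) : MeasurableSet (cylE n a) := by
  have : cylE n a = ⋂ i ∈ Set.Iic n, (fun ω : ℕ → ℕ => ω i) ⁻¹' {a i} := by
    ext ω; simp [cylE, Set.mem_iInter]
  rw [this]
  exact MeasurableSet.biInter (Set.to_countable _)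
    (fun i _ => (measurable_pi_apply i) (measurableSet_singleton _))

lemma cylE_congr {n : ℕ} {a a' : ℕ → ℕ} (h : ∀ i ≤ n, a i = a' i) :
    cylE n a = cylE n a' := by
  ext ω
  constructor <;> intro hw i hi
  · rw [← h i hi]; exact hw i hi
  · rw [h i hi]; exact hw i hi

lemma mem_cylE_ext {n : ℕ} {ω : ℕ → ℕ} {b : Fin (n+1) → ℕ} :
    ω ∈ cylE n (ext b) ↔ (fun i : Fin (n+1) => ω i) = b := by
  constructor
  · intro h; funext i
    have := h i.val (Nat.lt_succ_iff.mp i.isLt)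
    rw [this, ext_val]
  · intro h i hi
    have hi' : i < n + 1 := Nat.lt_succ_iff.mpr hi
    have := congrFun h ⟨i, hi'⟩
    simpa [ext, dif_pos hi', hi] using this

section Law

variable {pu pd : ℝ} {P0 : Measure (ℕ → ℕ)}

/-- cylinder weight. -/
noncomputable def W (P0 : Measure (ℕ → ℕ)) (n : ℕ) (b : Fin (n+1) → ℕ) : ENNReal :=
  P0 (cylE n (ext b))

lemma law_cyl (hP0 : IsLevelChainLaw 1 pu pd (Measure.dirac 0) P0) (n : ℕ) (a : ℕ → ℕ) :
    P0 (cylE n a) =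
      (if a 0 = 0 then 1 else 0) *
        ENNReal.ofReal (∏ i ∈ Finset.range n, rs pu pd (a i) (a (i+1))) := by
  have h := hP0 n a
  have hd : (Measure.dirac 0 : Measure ℕ) {a 0} = (if a 0 = 0 then 1 else 0) := by
    rw [Measure.dirac_apply' _ (measurableSet_singleton _)]
    by_cases h0 : a 0 = 0
    · simp [h0]
    · simp [Set.indicator, Ne.symm h0, h0]
  rw [cylE]
  rw [h, hd]
  congr 1

lemma W_zero (b : Fin 1 → ℕ) (hP0 : IsLevelChainLaw 1 pu pd (Measure.dirac 0) P0) :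
    W P0 0 b = if b 0 = 0 then 1 else 0 := by
  rw [W, law_cyl hP0]
  have : ext b 0 = b 0 := ext_val b 0
  simp [this]

lemma W_succ (hpu : 0 ≤ pu) (hpd : 0 ≤ pd) (hsum : pu + pd = 1)
    (hP0 : IsLevelChainLaw 1 pu pd (Measure.dirac 0) P0) (n : ℕ) (b : Fin (n+2) → ℕ) :
    W P0 (n+1) b = W P0 n (Fin.init b) *
      Qk pu pd (b (Fin.castSucc (Fin.last n))) (b (Fin.last (n+1))) := by
  rw [W, W, law_cyl hP0, law_cyl hP0]
  have hinit : ∀ i ≤ n, ext b i = ext (Fin.init b) i := by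
    intro i hi
    have h1 : i < n + 1 := Nat.lt_succ_of_le hi
    have h2 : i < n + 2 := Nat.lt_succ_of_lt h1
    simp only [ext, dif_pos h1, dif_pos h2]
    rw [Fin.init]
    congr 1
  have h00 : ext b 0 = ext (Fin.init b) 0 := hinit 0 (Nat.zero_le n)
  have hprod : ∀ i ∈ Finset.range n,
      rs pu pd (ext b i) (ext b (i+1)) = rs pu pd (ext (Fin.init b) i) (ext (Fin.init b) (i+1)) := by
    intro i hi
    have hi' := Finset.mem_range.mp hi
    rw [hinit i (le_of_lt hi'), hinit (i+1) hi']
  have hnn : 0 ≤ ∏ i ∈ Finset.range n, rs pu pd (ext b i) (ext b (i+1)) :=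
    Finset.prod_nonneg (fun i _ => rs_nonneg hpu hpd hsum _ _)
  rw [Finset.prod_range_succ, ENNReal.ofReal_mul hnn, ← mul_assoc]
  rw [Finset.prod_congr rfl hprod, h00]
  congr 1
  have e1 : ext b n = b (Fin.castSucc (Fin.last n)) := ext_val b (Fin.castSucc (Fin.last n))
  have e2 : ext b (n+1) = b (Fin.last (n+1)) := ext_val b (Fin.last (n+1))
  rw [e1, e2, ofReal_rs hsum]

/-- Lemma A: measure of a cylinder-type event as a sum of weights. -/
lemma meas_restrict (n : ℕ) (S : Set (Fin (n+1) → ℕ)) :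
    P0 {ω | (fun i : Fin (n+1) => ω i) ∈ S} = ∑' b : Fin (n+1) → ℕ, S.indicator (W P0 n) b := by
  classical
  set f : (Fin (n+1) → ℕ) → Set (ℕ → ℕ) :=
    fun b => if b ∈ S then cylE n (ext b) else ∅ with hf
  have hset : {ω | (fun i : Fin (n+1) => ω i) ∈ S} = ⋃ b, f b := by
    ext ω
    simp only [Set.mem_setOf_eq, Set.mem_iUnion, hf]
    constructor
    · intro h
      exact ⟨fun i => ω i, by rw [if_pos h]; exact mem_cylE_ext.mpr rfl⟩
    · rintro ⟨b, hb⟩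
      by_cases hbS : b ∈ S
      · rw [if_pos hbS] at hb
        rw [mem_cylE_ext.mp hb]; exact hbS
      · rw [if_neg hbS] at hb; exact absurd hb (Set.notMem_empty ω)
  have hdisj : Pairwise (Function.onFun Disjoint f) := by
    intro b b' hne
    simp only [Function.onFun, hf]
    refine Set.disjoint_left.mpr ?_
    intro ω hω hω'
    have h1 : ω ∈ cylE n (ext b) := by
      by_cases h : b ∈ S
      · rwa [if_pos h] at hω
      · rw [if_neg h] at hω; exact absurd hω (Set.notMem_empty ω)
    have h2 : ω ∈ cylE n (ext b') := by
      by_cases h : b' ∈ S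
      · rwa [if_pos h] at hω'
      · rw [if_neg h] at hω'; exact absurd hω' (Set.notMem_empty ω)
    exact hne ((mem_cylE_ext.mp h1).symm.trans (mem_cylE_ext.mp h2))
  have hms : ∀ b, MeasurableSet (f b) := by
    intro b
    by_cases h : b ∈ S
    · rw [hf]; simp only [if_pos h]; exact measurable_cylE n (ext b)
    · rw [hf]; simp only [if_neg h]; exact MeasurableSet.empty
  rw [hset, measure_iUnion hdisj hms]
  congr 1
  funext b
  by_cases h : b ∈ S
  · simp [hf, if_pos h, Set.indicator_of_mem h, W]
  · simp [hf, if_neg h, Set.indicator_of_notMem h]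

/-- events: `ω j = l` and a per-coordinate predicate holds up to time `j`. -/
def EV (Pp : ℕ → ℕ → Prop) (j l : ℕ) : Set (ℕ → ℕ) :=
  {ω | ω j = l ∧ ∀ i ≤ j, Pp i (ω i)}

lemma measurable_EV (Pp : ℕ → ℕ → Prop) (j l : ℕ) : MeasurableSet (EV Pp j l) := by
  have : EV Pp j l = ((fun ω : ℕ → ℕ => ω j) ⁻¹' {l}) ∩
      ⋂ i ∈ Set.Iic j, (fun ω : ℕ → ℕ => ω i) ⁻¹' {x | Pp i x} := by
    ext ω; simp [EV]
  rw [this]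
  exact ((measurable_pi_apply j) (measurableSet_singleton _)).inter
    (MeasurableSet.biInter (Set.to_countable _)
      (fun i _ => (measurable_pi_apply i) (MeasurableSet.of_discrete)))

lemma EV_eq_restrict (Pp : ℕ → ℕ → Prop) (j l : ℕ) :
    EV Pp j l = {ω | (fun i : Fin (j+1) => ω i) ∈
      {b : Fin (j+1) → ℕ | b (Fin.last j) = l ∧ ∀ i, Pp i.val (b i)}} := by
  ext ω
  simp only [EV, Set.mem_setOf_eq]
  constructor
  · rintro ⟨h1, h2⟩
    exact ⟨h1, fun i => h2 i.val (Nat.lt_succ_iff.mp i.isLt)⟩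
  · rintro ⟨h1, h2⟩
    exact ⟨h1, fun i hi => h2 ⟨i, Nat.lt_succ_iff.mpr hi⟩⟩

variable {pu pd : ℝ} {P0 : Measure (ℕ → ℕ)}

lemma meas_EV_eq (Pp : ℕ → ℕ → Prop) (j l : ℕ) :
    P0 (EV Pp j l) = ∑' b : Fin (j+1) → ℕ,
      ({b : Fin (j+1) → ℕ | b (Fin.last j) = l ∧ ∀ i, Pp i.val (b i)}).indicator (W P0 j) b := by
  rw [EV_eq_restrict, meas_restrict]

/-- append equivalence. -/
def snocEquiv (n : ℕ) : ((Fin (n+1) → ℕ) × ℕ) ≃ (Fin (n+2) → ℕ) where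
  toFun p := Fin.snoc p.1 p.2
  invFun b := (Fin.init b, b (Fin.last _))
  left_inv p := by simp
  right_inv b := by simp

/-- One-step recursion for the family of events `EV`. -/
lemma rec_EV (hpu : 0 ≤ pu) (hpd : 0 ≤ pd) (hsum : pu + pd = 1)
    (hP0 : IsLevelChainLaw 1 pu pd (Measure.dirac 0) P0)
    (Pp : ℕ → ℕ → Prop) (j l : ℕ) (hl : Pp (j+1) l) :
    P0 (EV Pp (j+1) l) = ∑' k, P0 (EV Pp j k) * Qk pu pd k l := by
  classical
  have hcommonR : ∑' k, P0 (EV Pp j k) * Qk pu pd k l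
      = ∑' a : Fin (j+1) → ℕ,
        (if ∀ i : Fin (j+1), Pp i.val (a i) then W P0 j a * Qk pu pd (a (Fin.last j)) l else 0) := by
    have h1 : ∀ k, P0 (EV Pp j k) * Qk pu pd k l
        = ∑' a : Fin (j+1) → ℕ,
          ({b : Fin (j+1) → ℕ | b (Fin.last j) = k ∧ ∀ i, Pp i.val (b i)}).indicator (W P0 j) a
            * Qk pu pd k l := by
      intro k; rw [meas_EV_eq, ENNReal.tsum_mul_right]
    rw [tsum_congr h1, ENNReal.tsum_comm]
    refine tsum_congr (fun a => ?_)
    rw [tsum_eq_single (a (Fin.last j)) ?_]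
    · by_cases hP : ∀ i : Fin (j+1), Pp i.val (a i)
      · rw [if_pos hP, Set.indicator_of_mem (by exact ⟨rfl, hP⟩)]
      · rw [if_neg hP, Set.indicator_of_notMem (by rintro ⟨-, h⟩; exact hP h), zero_mul]
    · intro k hk
      rw [Set.indicator_of_notMem (by rintro ⟨h, -⟩; exact hk h.symm), zero_mul]
  rw [hcommonR, meas_EV_eq]
  rw [← (snocEquiv j).tsum_eq]
  rw [ENNReal.tsum_prod']
  refine tsum_congr (fun a => ?_)
  rw [tsum_eq_single l ?_]
  swap
  · intro k hk
    refine Set.indicator_of_notMem ?_ _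
    rintro ⟨h, -⟩
    simp only [snocEquiv, Equiv.coe_fn_mk, Fin.snoc_last] at h
    exact hk h
  · simp only [snocEquiv, Equiv.coe_fn_mk]
    by_cases hP : ∀ i : Fin (j+1), Pp i.val (a i)
    · rw [if_pos hP]
      have hmem : (Fin.snoc a l : Fin (j+2) → ℕ) ∈
          {b : Fin (j+2) → ℕ | b (Fin.last (j+1)) = l ∧ ∀ i, Pp i.val (b i)} := by
        refine ⟨Fin.snoc_last _ _, fun i => ?_⟩
        refine Fin.lastCases ?_ (fun i' => ?_) i
        · rw [Fin.snoc_last]; exact hl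
        · rw [Fin.snoc_castSucc]; exact hP i'
      rw [Set.indicator_of_mem hmem]
      rw [W_succ hpu hpd hsum hP0]
      rw [Fin.init_snoc, Fin.snoc_castSucc, Fin.snoc_last]
    · rw [if_neg hP]
      refine Set.indicator_of_notMem ?_ _
      rintro ⟨-, h⟩
      refine hP (fun i' => ?_)
      have := h (Fin.castSucc i')
      rwa [Fin.snoc_castSucc] at this

def Ptriv : ℕ → ℕ → Prop := fun _ _ => True
def Palive : ℕ → ℕ → Prop := fun i x => 1 ≤ i → x ≠ 0

/-- marginal at time `j`. -/
noncomputable def mm (P0 : Measure (ℕ → ℕ)) (j l : ℕ) : ENNReal := P0 (EV Ptriv j l)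
/-- killed (at `0`) marginal at time `j`. -/
noncomputable def uu (P0 : Measure (ℕ → ℕ)) (j l : ℕ) : ENNReal := P0 (EV Palive j l)

lemma EV_triv (j l : ℕ) : EV Ptriv j l = {ω | ω j = l} := by
  ext ω; simp [EV, Ptriv]

lemma EV_zero (Pp : ℕ → ℕ → Prop) (h0 : ∀ x, Pp 0 x) (l : ℕ) :
    EV Pp 0 l = cylE 0 (fun _ => l) := by
  ext ω
  simp only [EV, cylE, Set.mem_setOf_eq, Nat.le_zero]
  constructor
  · rintro ⟨h1, -⟩ i hi; subst hi; exact h1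
  · intro h; exact ⟨h 0 rfl, fun i hi => by subst hi; exact h0 _⟩

variable {pu pd : ℝ} {P0 : Measure (ℕ → ℕ)}

lemma meas_cyl_zero (hP0 : IsLevelChainLaw 1 pu pd (Measure.dirac 0) P0) (l : ℕ) :
    P0 (cylE 0 (fun _ => l)) = if l = 0 then 1 else 0 := by
  rw [law_cyl hP0]; simp

lemma mm_zero (hP0 : IsLevelChainLaw 1 pu pd (Measure.dirac 0) P0) (l : ℕ) :
    mm P0 0 l = if l = 0 then 1 else 0 := by
  rw [mm, EV_zero Ptriv (fun _ => trivial), meas_cyl_zero hP0]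

lemma uu_zero (hP0 : IsLevelChainLaw 1 pu pd (Measure.dirac 0) P0) (l : ℕ) :
    uu P0 0 l = if l = 0 then 1 else 0 := by
  rw [uu, EV_zero Palive (fun _ => by simp [Palive]), meas_cyl_zero hP0]

lemma uu_dead (j : ℕ) (hj : 1 ≤ j) : uu P0 j 0 = 0 := by
  have : EV Palive j 0 = ∅ := by
    ext ω
    simp only [EV, Set.mem_setOf_eq, Set.mem_empty_iff_false, iff_false, not_and]
    intro h1 h2
    exact (h2 j le_rfl hj) h1
  rw [uu, this, measure_empty]

lemma Qk_zero_of {k l : ℕ} (hl : 1 ≤ l) (h1 : k ≠ l - 1) (h2 : k ≠ l + 1) :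
    Qk pu pd k l = 0 := by
  unfold Qk
  split_ifs <;> first | rfl | omega | tauto

lemma tsum_Qk (v : ℕ → ENNReal) {l : ℕ} (hl : 1 ≤ l) :
    ∑' k, v k * Qk pu pd k l =
      (if l = 1 then v 0 else v (l-1) * ENNReal.ofReal pu) + v (l+1) * ENNReal.ofReal pd := by
  classical
  rw [tsum_eq_sum (s := ({l-1, l+1} : Finset ℕ))
    (fun k hk => by
      rw [Qk_zero_of hl (fun h => hk (by simp [h])) (fun h => hk (by simp [h])), mul_zero])]
  rw [Finset.sum_pair (by omega : l - 1 ≠ l + 1)]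
  by_cases h1 : l = 1
  · subst h1
    have q1 : Qk pu pd 0 1 = 1 := by simp [Qk]
    have q2 : Qk pu pd 2 1 = ENNReal.ofReal pd := by simp [Qk]
    norm_num [q1, q2]
  · have hl2 : 2 ≤ l := by omega
    have q1 : Qk pu pd (l-1) l = ENNReal.ofReal pu := by
      have h2 : l - 1 ≠ 0 := by omega
      have h3 : l = l - 1 + 1 := by omega
      simp [Qk, h2, ← h3]
    have q2 : Qk pu pd (l+1) l = ENNReal.ofReal pd := by
      have h2 : ¬ (l = l + 1 + 1) := by omega
      simp [Qk, h2]
    rw [q1, q2, if_neg h1]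

lemma tsum_Qk0 (v : ℕ → ENNReal) :
    ∑' k, v k * Qk pu pd k 0 = v 1 * ENNReal.ofReal pd := by
  classical
  have hz : ∀ k, k ≠ 1 → v k * Qk pu pd k 0 = 0 := by
    intro k hk
    have : Qk pu pd k 0 = 0 := by
      unfold Qk
      split_ifs <;> first | rfl | omega | tauto
    rw [this, mul_zero]
  rw [tsum_eq_single 1 hz]
  have h1 : Qk pu pd 1 0 = ENNReal.ofReal pd := by simp [Qk]
  rw [h1]

lemma mm_rec (hpu : 0 ≤ pu) (hpd : 0 ≤ pd) (hsum : pu + pd = 1)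
    (hP0 : IsLevelChainLaw 1 pu pd (Measure.dirac 0) P0) (j l : ℕ) :
    mm P0 (j+1) l = ∑' k, mm P0 j k * Qk pu pd k l :=
  rec_EV hpu hpd hsum hP0 Ptriv j l trivial

lemma uu_rec (hpu : 0 ≤ pu) (hpd : 0 ≤ pd) (hsum : pu + pd = 1)
    (hP0 : IsLevelChainLaw 1 pu pd (Measure.dirac 0) P0) (j l : ℕ) (hl : 1 ≤ l) :
    uu P0 (j+1) l = ∑' k, uu P0 j k * Qk pu pd k l :=
  rec_EV hpu hpd hsum hP0 Palive j l (fun _ => by omega)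

lemma uu_one (hpu : 0 ≤ pu) (hpd : 0 ≤ pd) (hsum : pu + pd = 1)
    (hP0 : IsLevelChainLaw 1 pu pd (Measure.dirac 0) P0) (l : ℕ) :
    uu P0 1 l = if l = 1 then 1 else 0 := by
  by_cases hl : 1 ≤ l
  · rw [uu_rec hpu hpd hsum hP0 0 l hl, tsum_Qk _ hl]
    by_cases h1 : l = 1
    · subst h1
      rw [if_pos rfl, if_pos rfl, uu_zero hP0, uu_zero hP0]
      norm_num
    · rw [if_neg h1, if_neg h1, uu_zero hP0, uu_zero hP0]
      have h2 : l - 1 ≠ 0 := by omega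
      have h3 : l + 1 ≠ 0 := by omega
      simp [h2, h3]
  · have : l = 0 := by omega
    subst this
    rw [uu_dead 1 le_rfl]
    simp

end Law

/-- geometric bound for the marginal. -/
noncomputable def cb (pu pd : ℝ) (l : ℕ) : ENNReal :=
  if l = 0 then 1 else (ENNReal.ofReal pd)⁻¹ * (ENNReal.ofReal (pu/pd))^(l-1)

section Bounds

variable {pu pd : ℝ} {P0 : Measure (ℕ → ℕ)}
  (hpu : 0 < pu) (hpd : 0 < pd) (hsum : pu + pd = 1)

include hpu hpd hsum

lemma key_id : ENNReal.ofReal pu + ENNReal.ofReal pd * (ENNReal.ofReal (pu/pd))^2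
    = ENNReal.ofReal (pu/pd) := by
  have h1 : (0:ℝ) ≤ pu/pd := by positivity
  rw [← ENNReal.ofReal_pow h1, ← ENNReal.ofReal_mul hpd.le, ← ENNReal.ofReal_add hpu.le (by positivity)]
  congr 1
  field_simp
  linear_combination hsum

lemma key_sum : ENNReal.ofReal pu + ENNReal.ofReal pd = 1 := by
  rw [← ENNReal.ofReal_add hpu.le hpd.le, hsum, ENNReal.ofReal_one]

lemma key_rho : ENNReal.ofReal pd * ENNReal.ofReal (pu/pd) = ENNReal.ofReal pu := by
  rw [← ENNReal.ofReal_mul hpd.le]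
  congr 1
  field_simp

lemma key_inv : (ENNReal.ofReal pd)⁻¹ * ENNReal.ofReal pd = 1 :=
  ENNReal.inv_mul_cancel (by simp [hpd]) ENNReal.ofReal_ne_top

lemma mm_bound (hP0 : IsLevelChainLaw 1 pu pd (Measure.dirac 0) P0) :
    ∀ j l, mm P0 j l ≤ cb pu pd l := by
  intro j
  induction j with
  | zero =>
    intro l
    rw [mm_zero hP0]
    by_cases h : l = 0
    · subst h; simp [cb]
    · simp [h]
  | succ j ih =>
    intro l
    rcases Nat.eq_zero_or_pos l with hl | hl
    · subst hl
      rw [mm_rec hpu.le hpd.le hsum hP0, tsum_Qk0]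
      calc mm P0 j 1 * ENNReal.ofReal pd ≤ cb pu pd 1 * ENNReal.ofReal pd :=
            mul_le_mul_left (ih 1) _
        _ = 1 := by
            simp only [cb, if_neg (one_ne_zero)]
            simpa using key_inv hpu hpd hsum
        _ = cb pu pd 0 := by simp [cb]
    · rw [mm_rec hpu.le hpd.le hsum hP0, tsum_Qk _ hl]
      by_cases h1 : l = 1
      · subst h1
        rw [if_pos rfl]
        have c2 : cb pu pd 2 * ENNReal.ofReal pd = ENNReal.ofReal (pu/pd) := by
          simp only [cb, if_neg (by norm_num : (2:ℕ) ≠ 0)]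
          rw [pow_one, mul_assoc, mul_comm (ENNReal.ofReal (pu/pd)) _, ← mul_assoc,
            key_inv hpu hpd hsum, one_mul]
        calc mm P0 j 0 + mm P0 j 2 * ENNReal.ofReal pd
            ≤ cb pu pd 0 + cb pu pd 2 * ENNReal.ofReal pd :=
              add_le_add (ih 0) (mul_le_mul_left (ih 2) _)
          _ = 1 + ENNReal.ofReal (pu/pd) := by rw [c2]; simp [cb]
          _ = cb pu pd 1 := by
              simp only [cb, if_neg one_ne_zero, Nat.sub_self, pow_zero, mul_one]
              rw [← ENNReal.ofReal_inv_of_pos hpd, ← ENNReal.ofReal_one,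
                ← ENNReal.ofReal_add (by norm_num) (by positivity)]
              congr 1
              field_simp
              linarith
      · have hl2 : 2 ≤ l := by omega
        rw [if_neg h1]
        calc (mm P0 j (l-1)) * ENNReal.ofReal pu + mm P0 j (l+1) * ENNReal.ofReal pd
            ≤ cb pu pd (l-1) * ENNReal.ofReal pu + cb pu pd (l+1) * ENNReal.ofReal pd :=
              add_le_add (mul_le_mul_left (ih _) _) (mul_le_mul_left (ih _) _)
          _ = (ENNReal.ofReal pd)⁻¹ * (ENNReal.ofReal (pu/pd))^(l-2) *
                (ENNReal.ofReal pu + ENNReal.ofReal pd * (ENNReal.ofReal (pu/pd))^2) := by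
              have e1 : l - 1 ≠ 0 := by omega
              have e2 : l + 1 ≠ 0 := by omega
              have e3 : l - 1 - 1 = l - 2 := by omega
              have e4 : l + 1 - 1 = l - 2 + 2 := by omega
              simp only [cb, if_neg e1, if_neg e2, e3, e4]
              rw [pow_add]
              ring
          _ = cb pu pd l := by
              rw [key_id hpu hpd hsum]
              have e5 : l - 1 = l - 2 + 1 := by omega
              simp only [cb, if_neg (by omega : l ≠ 0), e5, pow_succ]
              ring

end Bounds


/-- superharmonic weight with source at `l0`. -/
noncomputable def Wsf (pu pd : ℝ) (l0 l : ℕ) : ENNReal :=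
  (ENNReal.ofReal (pd - pu))⁻¹ * (ENNReal.ofReal (pu/pd))^(l0 - min l l0)

/-- Green's function of the killed chain. -/
noncomputable def NN (P0 : Measure (ℕ → ℕ)) (l : ℕ) : ENNReal := ∑' j, uu P0 j l

section Super

variable {pu pd : ℝ} {P0 : Measure (ℕ → ℕ)}
  (hpu : 0 < pu) (hpd : 0 < pd) (hsum : pu + pd = 1) (hlt : pu < pd)

include hlt in
lemma key_di : (ENNReal.ofReal (pd - pu))⁻¹ * ENNReal.ofReal (pd - pu) = 1 :=
  ENNReal.inv_mul_cancel
    (by simp only [ne_eq, ENNReal.ofReal_eq_zero, not_le]; linarith)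
    ENNReal.ofReal_ne_top

omit hpu hpd hsum hlt in
lemma tsum_Qk_left (g : ℕ → ENNReal) {k : ℕ} (hk : 1 ≤ k) :
    ∑' l, Qk pu pd k l * g l
      = ENNReal.ofReal pu * g (k+1) + ENNReal.ofReal pd * g (k-1) := by
  classical
  rw [tsum_eq_sum (s := ({k+1, k-1} : Finset ℕ))
    (fun l hl => by
      simp only [Finset.mem_insert, Finset.mem_singleton] at hl
      push_neg at hl
      have : Qk pu pd k l = 0 := by
        unfold Qk
        split_ifs <;> first | rfl | omega
      rw [this, zero_mul])]
  rw [Finset.sum_pair (by omega : k + 1 ≠ k - 1)]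
  have h0 : k ≠ 0 := by omega
  have q1 : Qk pu pd k (k+1) = ENNReal.ofReal pu := by simp [Qk, h0]
  have q2 : Qk pu pd k (k-1) = ENNReal.ofReal pd := by
    have h3 : ¬ (k - 1 = k + 1) := by omega
    have h4 : k - 1 + 1 = k := by omega
    simp [Qk, h0, h3, h4]
  rw [q1, q2]

include hpu hpd hsum hlt in
lemma superharm (l0 : ℕ) (hl0 : 1 ≤ l0) (k : ℕ) (hk : 1 ≤ k) :
    ENNReal.ofReal pu * Wsf pu pd l0 (k+1) + ENNReal.ofReal pd * Wsf pu pd l0 (k-1)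
      + (if k = l0 then 1 else 0) ≤ Wsf pu pd l0 k := by
  set Di := (ENNReal.ofReal (pd - pu))⁻¹ with hDi
  set ρ := ENNReal.ofReal (pu/pd) with hρ
  rcases lt_trichotomy k l0 with hc | hc | hc
  · have e1 : l0 - min (k+1) l0 = l0 - (k+1) := by rw [min_eq_left (by omega)]
    have e2 : l0 - min (k-1) l0 = (l0 - (k+1)) + 2 := by rw [min_eq_left (by omega)]; omega
    have e3 : l0 - min k l0 = (l0 - (k+1)) + 1 := by rw [min_eq_left (by omega)]; omega
    rw [if_neg (by omega), add_zero, Wsf, Wsf, Wsf, e1, e2, e3, ← hDi, ← hρ]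
    refine le_of_eq ?_
    calc ENNReal.ofReal pu * (Di * ρ^(l0-(k+1))) + ENNReal.ofReal pd * (Di * ρ^(l0-(k+1)+2))
        = Di * ρ^(l0-(k+1)) * (ENNReal.ofReal pu + ENNReal.ofReal pd * ρ^2) := by ring
      _ = Di * ρ^(l0-(k+1)) * ρ := by rw [hρ, key_id hpu hpd hsum]
      _ = Di * ρ^(l0-(k+1)+1) := by rw [pow_succ]; ring
  · subst hc
    have e1 : k - min (k+1) k = 0 := by rw [min_eq_right (by omega)]; omega
    have e2 : k - min (k-1) k = 1 := by rw [min_eq_left (by omega)]; omega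
    have e3 : k - min k k = 0 := by omega
    rw [if_pos rfl, Wsf, Wsf, Wsf, e1, e2, e3, ← hDi, ← hρ]
    simp only [pow_zero, pow_one, mul_one]
    refine le_of_eq ?_
    have h1 : ENNReal.ofReal pd * (Di * ρ) = Di * ENNReal.ofReal pu := by
      rw [hρ, ← key_rho hpu hpd hsum]
      ring
    rw [h1]
    have h2 : (1:ENNReal) = Di * ENNReal.ofReal (pd - pu) := (key_di hlt).symm
    calc ENNReal.ofReal pu * Di + Di * ENNReal.ofReal pu + 1
        = Di * (ENNReal.ofReal pu + ENNReal.ofReal pu + ENNReal.ofReal (pd - pu)) := by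
          rw [h2]; ring
      _ = Di := by
          rw [← ENNReal.ofReal_add hpu.le hpu.le,
            ← ENNReal.ofReal_add (by positivity) (by linarith)]
          have : pu + pu + (pd - pu) = 1 := by linarith
          rw [this, ENNReal.ofReal_one, mul_one]
  · have e1 : l0 - min (k+1) l0 = 0 := by rw [min_eq_right (by omega)]; omega
    have e2 : l0 - min (k-1) l0 = 0 := by rw [min_eq_right (by omega)]; omega
    have e3 : l0 - min k l0 = 0 := by rw [min_eq_right (by omega)]; omega
    rw [if_neg (by omega), add_zero, Wsf, Wsf, Wsf, e1, e2, e3, ← hDi]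
    simp only [pow_zero, mul_one]
    refine le_of_eq ?_
    calc ENNReal.ofReal pu * Di + ENNReal.ofReal pd * Di
        = (ENNReal.ofReal pu + ENNReal.ofReal pd) * Di := by ring
      _ = Di := by rw [key_sum hpu hpd hsum, one_mul]

include hpu hpd hsum hlt in
lemma T_step (hP0 : IsLevelChainLaw 1 pu pd (Measure.dirac 0) P0)
    (l0 : ℕ) (hl0 : 1 ≤ l0) (n : ℕ) (hn : 1 ≤ n) :
    (∑' l, uu P0 (n+1) l * Wsf pu pd l0 l) + uu P0 n l0
      ≤ ∑' l, uu P0 n l * Wsf pu pd l0 l := by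
  have h1 : (∑' l, uu P0 (n+1) l * Wsf pu pd l0 l)
      ≤ ∑' k, uu P0 n k * (∑' l, Qk pu pd k l * Wsf pu pd l0 l) := by
    calc ∑' l, uu P0 (n+1) l * Wsf pu pd l0 l
        ≤ ∑' l, (∑' k, uu P0 n k * Qk pu pd k l) * Wsf pu pd l0 l := by
          refine ENNReal.tsum_le_tsum (fun l => ?_)
          rcases Nat.eq_zero_or_pos l with h | h
          · subst h; rw [uu_dead (n+1) (by omega), zero_mul]; exact zero_le
          · rw [uu_rec hpu.le hpd.le hsum hP0 n l h]
      _ = ∑' l, ∑' k, uu P0 n k * Qk pu pd k l * Wsf pu pd l0 l := by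
          refine tsum_congr (fun l => ?_)
          rw [← ENNReal.tsum_mul_right]
      _ = ∑' k, ∑' l, uu P0 n k * Qk pu pd k l * Wsf pu pd l0 l := ENNReal.tsum_comm
      _ = ∑' k, uu P0 n k * (∑' l, Qk pu pd k l * Wsf pu pd l0 l) := by
          refine tsum_congr (fun k => ?_)
          rw [← ENNReal.tsum_mul_left]
          exact tsum_congr (fun l => by ring)
  have h2 : uu P0 n l0 = ∑' k, uu P0 n k * (if k = l0 then 1 else 0) := by
    rw [tsum_eq_single l0 (fun k hk => by rw [if_neg hk, mul_zero]), if_pos rfl, mul_one]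
  calc (∑' l, uu P0 (n+1) l * Wsf pu pd l0 l) + uu P0 n l0
      ≤ (∑' k, uu P0 n k * (∑' l, Qk pu pd k l * Wsf pu pd l0 l))
          + ∑' k, uu P0 n k * (if k = l0 then 1 else 0) := add_le_add h1 (le_of_eq h2)
    _ = ∑' k, (uu P0 n k * (∑' l, Qk pu pd k l * Wsf pu pd l0 l)
          + uu P0 n k * (if k = l0 then 1 else 0)) := ENNReal.tsum_add.symm
    _ ≤ ∑' k, uu P0 n k * Wsf pu pd l0 k := by
        refine ENNReal.tsum_le_tsum (fun k => ?_)
        rcases Nat.eq_zero_or_pos k with h | h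
        · subst h; rw [uu_dead n hn, zero_mul, zero_mul, add_zero]; exact zero_le
        · rw [← mul_add]
          refine mul_le_mul_right ?_ _
          rw [tsum_Qk_left _ h]
          exact superharm hpu hpd hsum hlt l0 hl0 k h

omit hpu hpd hsum hlt in
lemma NN_zero (hP0 : IsLevelChainLaw 1 pu pd (Measure.dirac 0) P0) : NN P0 0 = 1 := by
  rw [NN, tsum_eq_single 0 (fun j hj => uu_dead j (by omega)), uu_zero hP0, if_pos rfl]

include hpu hpd hsum hlt in
lemma NN_le (hP0 : IsLevelChainLaw 1 pu pd (Measure.dirac 0) P0) (l0 : ℕ) (hl0 : 1 ≤ l0) :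
    NN P0 l0 ≤ (ENNReal.ofReal (pd - pu))⁻¹ * (ENNReal.ofReal (pu/pd))^(l0 - 1) := by
  have hW1 : Wsf pu pd l0 1
      = (ENNReal.ofReal (pd - pu))⁻¹ * (ENNReal.ofReal (pu/pd))^(l0 - 1) := by
    rw [Wsf, min_eq_left hl0]
  have hT1 : ∑' l, uu P0 1 l * Wsf pu pd l0 l = Wsf pu pd l0 1 := by
    rw [tsum_eq_single 1 (fun l hl => by
      rw [uu_one hpu.le hpd.le hsum hP0, if_neg hl, zero_mul])]
    rw [uu_one hpu.le hpd.le hsum hP0, if_pos rfl, one_mul]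
  have hmain : ∀ n, (∑' l, uu P0 (n+1) l * Wsf pu pd l0 l)
      + ∑ j ∈ Finset.range (n+1), uu P0 j l0 ≤ Wsf pu pd l0 1 := by
    intro n
    induction n with
    | zero =>
      rw [Finset.sum_range_one, uu_zero hP0, if_neg (by omega), add_zero, hT1]
    | succ n ih =>
      calc (∑' l, uu P0 (n+2) l * Wsf pu pd l0 l) + ∑ j ∈ Finset.range (n+2), uu P0 j l0
          = ((∑' l, uu P0 (n+2) l * Wsf pu pd l0 l) + uu P0 (n+1) l0)
            + ∑ j ∈ Finset.range (n+1), uu P0 j l0 := by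
            rw [Finset.sum_range_succ]; ring
        _ ≤ (∑' l, uu P0 (n+1) l * Wsf pu pd l0 l) + ∑ j ∈ Finset.range (n+1), uu P0 j l0 :=
            add_le_add_left (T_step hpu hpd hsum hlt hP0 l0 hl0 (n+1) (by omega)) _
        _ ≤ Wsf pu pd l0 1 := ih
  have hpart : ∀ n, ∑ j ∈ Finset.range n, uu P0 j l0 ≤ Wsf pu pd l0 1 := by
    intro n
    rcases n with - | m
    · simp
    · exact le_trans (le_add_self) (hmain m)
  rw [NN, ← hW1, ENNReal.tsum_eq_iSup_sum]
  refine iSup_le (fun s => ?_)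
  obtain ⟨n, hn⟩ := s.exists_nat_subset_range
  exact le_trans (Finset.sum_le_sum_of_subset hn) (hpart n)

end Super

section RealFacts

lemma rgeom {γ : ℝ} (h : 1 < γ) (m : ℕ) : ∑ l ∈ Finset.range m, γ^l ≤ γ^m / (γ - 1) := by
  have h1 : γ - 1 ≠ 0 := by linarith
  rw [geom_sum_eq (by linarith : γ ≠ 1)]
  gcongr
  · linarith

end RealFacts

section Est2

variable {Λ pu pd : ℝ} {P0 : Measure (ℕ → ℕ)}
  (hpu : 0 < pu) (hpd : 0 < pd) (hsum : pu + pd = 1) (hlt : pu < pd) (hΛ : 1 < Λ)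
  (hγ : 1 < Λ^2 * (pu/pd))

/-- truncated integrand. -/
noncomputable def gtr (Λ : ℝ) (m x : ℕ) : ℝ := if x < m then Λ^(2*x) else 0

include hpu hpd in
lemma cb_eq (l : ℕ) : cb pu pd l = ENNReal.ofReal (if l = 0 then 1 else pd⁻¹ * (pu/pd)^(l-1)) := by
  rcases Nat.eq_zero_or_pos l with h | h
  · subst h; simp [cb]
  · rw [cb, if_neg (by omega), if_neg (by omega), ← ENNReal.ofReal_inv_of_pos hpd,
      ← ENNReal.ofReal_pow (by positivity), ← ENNReal.ofReal_mul (by positivity)]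

include hpu hpd hsum hΛ hγ in
lemma rsum_cb (m : ℕ) :
    ∑ l ∈ Finset.range m, Λ^(2*l) * (if l = 0 then 1 else pd⁻¹ * (pu/pd)^(l-1))
      ≤ (pd⁻¹ * Λ^2 / (Λ^2 * (pu/pd) - 1)) * (Λ^2 * (pu/pd))^m := by
  set γ := Λ^2 * (pu/pd) with hγdef
  have hterm : ∀ l ∈ Finset.range m,
      Λ^(2*l) * (if l = 0 then 1 else pd⁻¹ * (pu/pd)^(l-1)) ≤ (pd⁻¹ * Λ^2) * γ^l := by
    intro l _
    rcases Nat.eq_zero_or_pos l with h | h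
    · subst h
      have hΛ2 : (1:ℝ) ≤ Λ^2 := by nlinarith
      have hinv : pd * pd⁻¹ = 1 := mul_inv_cancel₀ hpd.ne'
      have hpd1 : pd ≤ 1 := by linarith
      have h1 : (1:ℝ) ≤ pd⁻¹ := by nlinarith
      norm_num
      nlinarith
    · rw [if_neg (by omega)]
      have hid : Λ^(2*l) * (pd⁻¹ * (pu/pd)^(l-1)) = (pd⁻¹ * Λ^2) * γ^(l-1) := by
        have e1 : 2*l = 2 + 2*(l-1) := by omega
        rw [e1, pow_add, hγdef, mul_pow, ← pow_mul]
        ring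
      rw [hid]
      have : γ^(l-1) ≤ γ^l := pow_le_pow_right₀ hγ.le (by omega)
      have hc : (0:ℝ) ≤ pd⁻¹ * Λ^2 := by positivity
      nlinarith
  calc ∑ l ∈ Finset.range m, Λ^(2*l) * (if l = 0 then 1 else pd⁻¹ * (pu/pd)^(l-1))
      ≤ ∑ l ∈ Finset.range m, (pd⁻¹ * Λ^2) * γ^l := Finset.sum_le_sum hterm
    _ = (pd⁻¹ * Λ^2) * ∑ l ∈ Finset.range m, γ^l := by rw [Finset.mul_sum]
    _ ≤ (pd⁻¹ * Λ^2) * (γ^m / (γ - 1)) := by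
        have := rgeom hγ m
        have hc : (0:ℝ) ≤ pd⁻¹ * Λ^2 := by positivity
        nlinarith
    _ = (pd⁻¹ * Λ^2 / (γ - 1)) * γ^m := by ring

include hpu hpd hsum hΛ hγ in
lemma sum_cb_le (m : ℕ) :
    ∑ l ∈ Finset.range m, ENNReal.ofReal (Λ^(2*l)) * cb pu pd l
      ≤ ENNReal.ofReal ((pd⁻¹ * Λ^2 / (Λ^2 * (pu/pd) - 1)) * (Λ^2 * (pu/pd))^m) := by
  calc ∑ l ∈ Finset.range m, ENNReal.ofReal (Λ^(2*l)) * cb pu pd l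
      = ENNReal.ofReal (∑ l ∈ Finset.range m,
          Λ^(2*l) * (if l = 0 then 1 else pd⁻¹ * (pu/pd)^(l-1))) := by
        rw [ENNReal.ofReal_sum_of_nonneg (fun l _ => by positivity)]
        refine Finset.sum_congr rfl (fun l _ => ?_)
        rw [cb_eq hpu hpd, ← ENNReal.ofReal_mul (by positivity)]
    _ ≤ _ := ENNReal.ofReal_le_ofReal (rsum_cb hpu hpd hsum hΛ hγ m)

include hpu hpd hlt in
lemma tail_cb (m : ℕ) (hm : 1 ≤ m) :
    ∑' t : ℕ, cb pu pd (m + t)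
      ≤ ENNReal.ofReal ((pd⁻¹ * (pu/pd)^(m-1)) * (1 - pu/pd)⁻¹) := by
  have hρ1 : pu/pd < 1 := (div_lt_one hpd).mpr hlt
  have hρ0 : (0:ℝ) ≤ pu/pd := by positivity
  have hterm : ∀ t : ℕ, cb pu pd (m + t)
      = ENNReal.ofReal (pd⁻¹ * (pu/pd)^(m-1)) * (ENNReal.ofReal (pu/pd))^t := by
    intro t
    have e1 : m + t - 1 = (m - 1) + t := by omega
    rw [cb_eq hpu hpd, if_neg (by omega), e1, pow_add, ← mul_assoc,
      ENNReal.ofReal_mul (by positivity : (0:ℝ) ≤ pd⁻¹ * (pu/pd)^(m-1)),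
      ENNReal.ofReal_pow hρ0]
  rw [tsum_congr hterm, ENNReal.tsum_mul_left, ENNReal.tsum_geometric]
  have hinv : (1 - ENNReal.ofReal (pu/pd))⁻¹ = ENNReal.ofReal ((1 - pu/pd)⁻¹) := by
    rw [← ENNReal.ofReal_one, ← ENNReal.ofReal_sub _ hρ0,
      ENNReal.ofReal_inv_of_pos (by linarith)]
  rw [hinv, ← ENNReal.ofReal_mul (by positivity)]

include hpu hpd hsum in
lemma lint_gtr (hP0 : IsLevelChainLaw 1 pu pd (Measure.dirac 0) P0) (j m : ℕ) :
    ∫⁻ ω, ENNReal.ofReal (gtr Λ m (ω j)) ∂P0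
      = ∑ l ∈ Finset.range m, ENNReal.ofReal (Λ^(2*l)) * mm P0 j l := by
  have hfun : (fun ω : ℕ → ℕ => ENNReal.ofReal (gtr Λ m (ω j)))
      = fun ω => ∑ l ∈ Finset.range m,
          (EV Ptriv j l).indicator (fun _ => ENNReal.ofReal (Λ^(2*l))) ω := by
    funext ω
    by_cases h : ω j < m
    · rw [Finset.sum_eq_single_of_mem (ω j) (Finset.mem_range.mpr h)
        (fun l _ hl => Set.indicator_of_notMem
          (by rw [EV_triv]; exact fun hc => hl (hc.symm ▸ rfl)) _)]
      rw [Set.indicator_of_mem (by rw [EV_triv]; exact rfl), gtr, if_pos h]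
    · rw [gtr, if_neg h, ENNReal.ofReal_zero]
      symm
      refine Finset.sum_eq_zero (fun l hl => Set.indicator_of_notMem ?_ _)
      rw [EV_triv]
      intro hc
      exact h (hc ▸ Finset.mem_range.mp hl)
  rw [hfun, lintegral_finset_sum _
    (fun l _ => (measurable_const.indicator (measurable_EV _ _ _)))]
  refine Finset.sum_congr rfl (fun l _ => ?_)
  rw [lintegral_indicator (measurable_EV _ _ _), setLIntegral_const, mm]

include hpu hpd hsum hlt hΛ hγ in
/-- Main estimate for part 2. -/
lemma Vvar_bound (hP0 : IsLevelChainLaw 1 pu pd (Measure.dirac 0) P0)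
    {ε cc : ℝ} (hε : 0 < ε) (hcc : 0 ≤ cc) (n m : ℕ) (hm : 1 ≤ m) :
    P0 {ω | ε ≤ cc * Vvar Λ n ω}
      ≤ (n : ENNReal) * ENNReal.ofReal ((pd⁻¹ * (pu/pd)^(m-1)) * (1 - pu/pd)⁻¹)
        + ENNReal.ofReal cc * ((n : ENNReal) *
            ENNReal.ofReal ((pd⁻¹ * Λ^2 / (Λ^2 * (pu/pd) - 1)) * (Λ^2 * (pu/pd))^m))
          / ENNReal.ofReal ε := by
  classical
  set Abad : Set (ℕ → ℕ) := {ω | ∃ j, j < n ∧ m ≤ ω j} with hAbad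
  set F : (ℕ → ℕ) → ENNReal :=
    fun ω => ENNReal.ofReal cc * ∑ j ∈ Finset.range n, ENNReal.ofReal (gtr Λ m (ω j)) with hF
  have hsub : {ω | ε ≤ cc * Vvar Λ n ω} ⊆ Abad ∪ {ω | ENNReal.ofReal ε ≤ F ω} := by
    intro ω hω
    by_cases hA : ω ∈ Abad
    · exact Or.inl hA
    · refine Or.inr ?_
      have hsmall : ∀ j, j < n → ω j < m := by
        intro j hj
        by_contra hc
        exact hA ⟨j, hj, by omega⟩
      have hV : Vvar Λ n ω = ∑ j ∈ Finset.range n, gtr Λ m (ω j) := by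
        refine Finset.sum_congr rfl (fun j hj => ?_)
        rw [gtr, if_pos (hsmall j (Finset.mem_range.mp hj))]
      have : ENNReal.ofReal ε ≤ ENNReal.ofReal (cc * Vvar Λ n ω) :=
        ENNReal.ofReal_le_ofReal hω
      calc ENNReal.ofReal ε ≤ ENNReal.ofReal (cc * Vvar Λ n ω) := this
        _ = ENNReal.ofReal cc * ENNReal.ofReal (Vvar Λ n ω) := ENNReal.ofReal_mul hcc
        _ = F ω := by
            rw [hF, hV, ENNReal.ofReal_sum_of_nonneg
              (fun j _ => by rw [gtr]; positivity)]
  have hAle : P0 Abad ≤ (n : ENNReal) *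
      ENNReal.ofReal ((pd⁻¹ * (pu/pd)^(m-1)) * (1 - pu/pd)⁻¹) := by
    have hsubA : Abad ⊆ ⋃ j ∈ Finset.range n, ⋃ t : ℕ, EV Ptriv j (m + t) := by
      rintro ω ⟨j, hj, hjm⟩
      refine Set.mem_biUnion (Finset.mem_range.mpr hj) ?_
      refine Set.mem_iUnion.mpr ⟨ω j - m, ?_⟩
      rw [EV_triv]
      simpa using (by omega : ω j = m + (ω j - m))
    calc P0 Abad ≤ P0 (⋃ j ∈ Finset.range n, ⋃ t : ℕ, EV Ptriv j (m + t)) :=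
          measure_mono hsubA
      _ ≤ ∑ j ∈ Finset.range n, P0 (⋃ t : ℕ, EV Ptriv j (m + t)) :=
          measure_biUnion_finset_le _ _
      _ ≤ ∑ j ∈ Finset.range n, ENNReal.ofReal ((pd⁻¹ * (pu/pd)^(m-1)) * (1 - pu/pd)⁻¹) := by
          refine Finset.sum_le_sum (fun j _ => ?_)
          calc P0 (⋃ t : ℕ, EV Ptriv j (m + t)) ≤ ∑' t : ℕ, P0 (EV Ptriv j (m + t)) :=
                measure_iUnion_le _
            _ ≤ ∑' t : ℕ, cb pu pd (m + t) :=
                ENNReal.tsum_le_tsum (fun t => mm_bound hpu hpd hsum hP0 j (m+t))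
            _ ≤ _ := tail_cb hpu hpd hlt m hm
      _ = (n : ENNReal) * ENNReal.ofReal ((pd⁻¹ * (pu/pd)^(m-1)) * (1 - pu/pd)⁻¹) := by
          rw [Finset.sum_const, Finset.card_range, nsmul_eq_mul]
  have hgm : ∀ j : ℕ, Measurable (fun ω : ℕ → ℕ => ENNReal.ofReal (gtr Λ m (ω j))) := by
    intro j
    exact (Measurable.of_discrete (f := fun x : ℕ => ENNReal.ofReal (gtr Λ m x))).comp
      (measurable_pi_apply j)
  have hFmeas : Measurable F := by
    exact Measurable.const_mul (Finset.measurable_sum _ (fun j _ => hgm j)) _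
  have hBle : P0 {ω | ENNReal.ofReal ε ≤ F ω}
      ≤ ENNReal.ofReal cc * ((n : ENNReal) *
          ENNReal.ofReal ((pd⁻¹ * Λ^2 / (Λ^2 * (pu/pd) - 1)) * (Λ^2 * (pu/pd))^m))
        / ENNReal.ofReal ε := by
    have h1 := meas_ge_le_lintegral_div (μ := P0) hFmeas.aemeasurable
      (by simp [hε] : ENNReal.ofReal ε ≠ 0) ENNReal.ofReal_ne_top
    refine le_trans h1 (ENNReal.div_le_div_right ?_ _)
    simp only [hF]
    rw [lintegral_const_mul _ (Finset.measurable_sum _ (fun j _ => hgm j))]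
    refine mul_le_mul_right ?_ _
    rw [lintegral_finset_sum _ (fun j _ => hgm j)]
    calc ∑ j ∈ Finset.range n, ∫⁻ ω, ENNReal.ofReal (gtr Λ m (ω j)) ∂P0
        = ∑ j ∈ Finset.range n, ∑ l ∈ Finset.range m, ENNReal.ofReal (Λ^(2*l)) * mm P0 j l := by
          exact Finset.sum_congr rfl (fun j _ => lint_gtr hpu hpd hsum hP0 j m)
      _ ≤ ∑ j ∈ Finset.range n,
            ENNReal.ofReal ((pd⁻¹ * Λ^2 / (Λ^2 * (pu/pd) - 1)) * (Λ^2 * (pu/pd))^m) := by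
          refine Finset.sum_le_sum (fun j _ => ?_)
          refine le_trans (Finset.sum_le_sum (fun l _ =>
            mul_le_mul_right (mm_bound hpu hpd hsum hP0 j l) _)) ?_
          exact sum_cb_le hpu hpd hsum hΛ hγ m
      _ = (n : ENNReal) * ENNReal.ofReal ((pd⁻¹ * Λ^2 / (Λ^2 * (pu/pd) - 1))
            * (Λ^2 * (pu/pd))^m) := by
          rw [Finset.sum_const, Finset.card_range, nsmul_eq_mul]
  calc P0 {ω | ε ≤ cc * Vvar Λ n ω} ≤ P0 (Abad ∪ {ω | ENNReal.ofReal ε ≤ F ω}) :=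
        measure_mono hsub
    _ ≤ P0 Abad + P0 {ω | ENNReal.ofReal ε ≤ F ω} := measure_union_le _ _
    _ ≤ _ := add_le_add hAle hBle

end Est2

section Est1

variable {Λ pu pd : ℝ} {P0 : Measure (ℕ → ℕ)}
  (hpu : 0 < pu) (hpd : 0 < pd) (hsum : pu + pd = 1) (hlt : pu < pd) (hΛ : 1 < Λ)
  (hγ : 1 < Λ^2 * (pu/pd))

/-- event of reaching level `≥ m` while alive. -/
def AMset (m : ℕ) : Set (ℕ → ℕ) := ⋃ j, ⋃ t : ℕ, EV Palive j (m + t)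

lemma AM_meas (m : ℕ) : MeasurableSet (AMset m) :=
  MeasurableSet.iUnion fun j => MeasurableSet.iUnion fun t => measurable_EV _ _ _

include hpu hpd hsum hlt in
lemma NN_le' (hP0 : IsLevelChainLaw 1 pu pd (Measure.dirac 0) P0) (l : ℕ) :
    NN P0 l ≤ ENNReal.ofReal (if l = 0 then 1 else (pd - pu)⁻¹ * (pu/pd)^(l-1)) := by
  rcases Nat.eq_zero_or_pos l with h | h
  · subst h; rw [NN_zero hP0]; simp
  · rw [if_neg (by omega)]
    refine le_trans (NN_le hpu hpd hsum hlt hP0 l h) (le_of_eq ?_)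
    have h2 : (0:ℝ) < pd - pu := by linarith
    rw [← ENNReal.ofReal_inv_of_pos (by linarith), ← ENNReal.ofReal_pow (by positivity),
      ← ENNReal.ofReal_mul (by positivity)]

include hpu hpd hsum hlt in
lemma AM_bound (hP0 : IsLevelChainLaw 1 pu pd (Measure.dirac 0) P0) (m : ℕ) (hm : 1 ≤ m) :
    P0 (AMset m) ≤ ENNReal.ofReal (((pd-pu)⁻¹ * (pu/pd)^(m-1)) * (1 - pu/pd)⁻¹) := by
  have hρ1 : pu/pd < 1 := (div_lt_one hpd).mpr hlt
  have hρ0 : (0:ℝ) ≤ pu/pd := by positivity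
  calc P0 (AMset m) ≤ ∑' j : ℕ, P0 (⋃ t : ℕ, EV Palive j (m + t)) := measure_iUnion_le _
    _ ≤ ∑' j : ℕ, ∑' t : ℕ, uu P0 j (m + t) :=
        ENNReal.tsum_le_tsum (fun j => measure_iUnion_le _)
    _ = ∑' t : ℕ, NN P0 (m + t) := ENNReal.tsum_comm
    _ ≤ ∑' t : ℕ, ENNReal.ofReal ((pd-pu)⁻¹ * (pu/pd)^(m-1)) * (ENNReal.ofReal (pu/pd))^t := by
        refine ENNReal.tsum_le_tsum (fun t => ?_)
        refine le_trans (NN_le' hpu hpd hsum hlt hP0 (m+t)) (le_of_eq ?_)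
        have e1 : m + t - 1 = (m - 1) + t := by omega
        have h2 : (0:ℝ) < pd - pu := by linarith
        rw [if_neg (by omega), e1, pow_add, ← mul_assoc,
          ENNReal.ofReal_mul (by positivity : (0:ℝ) ≤ (pd-pu)⁻¹ * (pu/pd)^(m-1)),
          ENNReal.ofReal_pow hρ0]
    _ = ENNReal.ofReal (((pd-pu)⁻¹ * (pu/pd)^(m-1)) * (1 - pu/pd)⁻¹) := by
        rw [ENNReal.tsum_mul_left, ENNReal.tsum_geometric]
        have hinv : (1 - ENNReal.ofReal (pu/pd))⁻¹ = ENNReal.ofReal ((1 - pu/pd)⁻¹) := by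
          rw [← ENNReal.ofReal_one, ← ENNReal.ofReal_sub _ hρ0,
            ENNReal.ofReal_inv_of_pos (by linarith)]
        have h2 : (0:ℝ) < pd - pu := by linarith
        rw [hinv, ← ENNReal.ofReal_mul (by positivity)]

/-- truncated occupation integrand at time `j`. -/
noncomputable def ht (Λ : ℝ) (m j : ℕ) : (ℕ → ℕ) → ENNReal := fun ω =>
  ∑ l ∈ Finset.range m, (EV Palive j l).indicator (fun _ => ENNReal.ofReal (Λ^(2*l))) ω

lemma ht_meas (m j : ℕ) : Measurable (ht Λ m j) :=
  Finset.measurable_sum _ (fun l _ => measurable_const.indicator (measurable_EV _ _ _))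

lemma lint_ht (m j : ℕ) :
    ∫⁻ ω, ht Λ m j ω ∂P0 = ∑ l ∈ Finset.range m, ENNReal.ofReal (Λ^(2*l)) * uu P0 j l := by
  simp only [ht]
  rw [lintegral_finset_sum _ (fun l _ => measurable_const.indicator (measurable_EV _ _ _))]
  exact Finset.sum_congr rfl (fun l _ => by
    rw [lintegral_indicator (measurable_EV _ _ _), setLIntegral_const, uu])

include hpu hpd hsum hΛ hγ in
lemma rsum_gen {c : ℝ} (hc : 1 ≤ c) (m : ℕ) :
    ∑ l ∈ Finset.range m, Λ^(2*l) * (if l = 0 then 1 else c * (pu/pd)^(l-1))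
      ≤ (c * Λ^2 / (Λ^2 * (pu/pd) - 1)) * (Λ^2 * (pu/pd))^m := by
  set γ := Λ^2 * (pu/pd) with hγdef
  have hΛ2 : (1:ℝ) ≤ Λ^2 := by nlinarith
  have hterm : ∀ l ∈ Finset.range m,
      Λ^(2*l) * (if l = 0 then 1 else c * (pu/pd)^(l-1)) ≤ (c * Λ^2) * γ^l := by
    intro l _
    rcases Nat.eq_zero_or_pos l with h | h
    · subst h
      norm_num
      nlinarith
    · rw [if_neg (by omega)]
      have hid : Λ^(2*l) * (c * (pu/pd)^(l-1)) = (c * Λ^2) * γ^(l-1) := by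
        have e1 : 2*l = 2 + 2*(l-1) := by omega
        rw [e1, pow_add, hγdef, mul_pow, ← pow_mul]
        ring
      rw [hid]
      have h2 : γ^(l-1) ≤ γ^l := pow_le_pow_right₀ hγ.le (by omega)
      have hcpos : (0:ℝ) ≤ c * Λ^2 := by nlinarith
      nlinarith
  calc ∑ l ∈ Finset.range m, Λ^(2*l) * (if l = 0 then 1 else c * (pu/pd)^(l-1))
      ≤ ∑ l ∈ Finset.range m, (c * Λ^2) * γ^l := Finset.sum_le_sum hterm
    _ = (c * Λ^2) * ∑ l ∈ Finset.range m, γ^l := by rw [Finset.mul_sum]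
    _ ≤ (c * Λ^2) * (γ^m / (γ - 1)) := by
        have := rgeom hγ m
        have hcpos : (0:ℝ) ≤ c * Λ^2 := by nlinarith
        nlinarith
    _ = (c * Λ^2 / (γ - 1)) * γ^m := by ring

include hpu hpd hsum hlt hΛ hγ in
lemma lint_htsum (hP0 : IsLevelChainLaw 1 pu pd (Measure.dirac 0) P0) (m : ℕ) :
    ∫⁻ ω, (∑' j, ht Λ m j ω) ∂P0
      ≤ ENNReal.ofReal (((pd-pu)⁻¹ * Λ^2 / (Λ^2 * (pu/pd) - 1)) * (Λ^2 * (pu/pd))^m) := by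
  have hc1 : (1:ℝ) ≤ (pd - pu)⁻¹ := by
    have h1 : pd - pu ≤ 1 := by linarith
    have h2 : 0 < pd - pu := by linarith
    have h3 : (pd - pu) * (pd - pu)⁻¹ = 1 := mul_inv_cancel₀ (by linarith)
    nlinarith
  rw [lintegral_tsum (fun j => (ht_meas m j).aemeasurable)]
  calc ∑' j, ∫⁻ ω, ht Λ m j ω ∂P0
      = ∑' j, ∑ l ∈ Finset.range m, ENNReal.ofReal (Λ^(2*l)) * uu P0 j l :=
        tsum_congr (fun j => lint_ht m j)
    _ = ∑ l ∈ Finset.range m, ENNReal.ofReal (Λ^(2*l)) * NN P0 l := by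
        rw [Summable.tsum_finsetSum (fun l _ => ENNReal.summable)]
        exact Finset.sum_congr rfl (fun l _ => by rw [NN, ENNReal.tsum_mul_left])
    _ ≤ ∑ l ∈ Finset.range m, ENNReal.ofReal (Λ^(2*l) *
          (if l = 0 then 1 else (pd-pu)⁻¹ * (pu/pd)^(l-1))) := by
        refine Finset.sum_le_sum (fun l _ => ?_)
        rw [ENNReal.ofReal_mul (by positivity : (0:ℝ) ≤ Λ^(2*l))]
        exact mul_le_mul_right (NN_le' hpu hpd hsum hlt hP0 l) _
    _ ≤ _ := by
        rw [← ENNReal.ofReal_sum_of_nonneg (fun l _ => by positivity)]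
        exact ENNReal.ofReal_le_ofReal (rsum_gen hpu hpd hsum hΛ hγ hc1 m)

lemma notAM_small {m : ℕ} {ω : ℕ → ℕ} (hω : ω ∉ AMset m) (j : ℕ)
    (halive : ∀ i ≤ j, Palive i (ω i)) : ω j < m := by
  by_contra hc
  refine hω (Set.mem_iUnion.mpr ⟨j, Set.mem_iUnion.mpr ⟨ω j - m, ?_⟩⟩)
  exact ⟨by omega, halive⟩

lemma alive_of_lt_tau0 {ω : ℕ → ℕ} {j : ℕ} (hj : j < tau0 ω) :
    ∀ i ≤ j, Palive i (ω i) := by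
  intro i hi h1
  have hlt' : i < tau0 ω := lt_of_le_of_lt hi hj
  intro hc
  have : i ∈ {k | 1 ≤ k ∧ ω k = 0} := ⟨h1, hc⟩
  have := Nat.sInf_le this
  rw [tau0] at hlt'
  omega

include hΛ in
lemma ofReal_Zvar_le {m : ℕ} {ω : ℕ → ℕ} (hω : ω ∉ AMset m) :
    ENNReal.ofReal (Zvar Λ ω) ≤ ∑' j, ht Λ m j ω := by
  have hterm : ∀ j ∈ Finset.range (tau0 ω),
      ENNReal.ofReal (Λ^(2 * ω j)) = ht Λ m j ω := by
    intro j hj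
    have hj' := Finset.mem_range.mp hj
    have halive := alive_of_lt_tau0 hj'
    have hsm := notAM_small hω j halive
    have hmem : ω ∈ EV Palive j (ω j) := by exact ⟨rfl, halive⟩
    simp only [ht]
    rw [Finset.sum_eq_single_of_mem (ω j) (Finset.mem_range.mpr hsm)
      (fun l _ hl => Set.indicator_of_notMem (fun hc => by
        obtain ⟨h1, -⟩ := hc
        exact hl h1.symm) _)]
    rw [Set.indicator_of_mem hmem]
  calc ENNReal.ofReal (Zvar Λ ω)
      = ∑ j ∈ Finset.range (tau0 ω), ENNReal.ofReal (Λ^(2 * ω j)) := by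
        rw [Zvar, ENNReal.ofReal_sum_of_nonneg (fun j _ => by positivity)]
    _ = ∑ j ∈ Finset.range (tau0 ω), ht Λ m j ω := Finset.sum_congr rfl hterm
    _ ≤ ∑' j, ht Λ m j ω := Summable.sum_le_tsum _ (fun j _ => zero_le) ENNReal.summable

include hpu hpd hsum hlt hΛ hγ in
/-- tail bound for `Zvar`. -/
lemma Zvar_tail (hP0 : IsLevelChainLaw 1 pu pd (Measure.dirac 0) P0)
    {t : ℝ} (ht0 : 0 < t) (m : ℕ) (hm : 1 ≤ m) :
    P0 {ω | t < Zvar Λ ω}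
      ≤ ENNReal.ofReal (((pd-pu)⁻¹ * (pu/pd)^(m-1)) * (1 - pu/pd)⁻¹)
        + ENNReal.ofReal (((pd-pu)⁻¹ * Λ^2 / (Λ^2 * (pu/pd) - 1)) * (Λ^2 * (pu/pd))^m)
          / ENNReal.ofReal t := by
  have hsub : {ω | t < Zvar Λ ω} ⊆ AMset m ∪ {ω | ENNReal.ofReal t ≤ ∑' j, ht Λ m j ω} := by
    intro ω hω
    by_cases hA : ω ∈ AMset m
    · exact Or.inl hA
    · refine Or.inr (le_trans (ENNReal.ofReal_le_ofReal (le_of_lt hω)) ?_)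
      exact ofReal_Zvar_le hΛ hA
  have hmeas : Measurable (fun ω => ∑' j, ht Λ m j ω) :=
    Measurable.ennreal_tsum (fun j => ht_meas m j)
  calc P0 {ω | t < Zvar Λ ω}
      ≤ P0 (AMset m) + P0 {ω | ENNReal.ofReal t ≤ ∑' j, ht Λ m j ω} :=
        le_trans (measure_mono hsub) (measure_union_le _ _)
    _ ≤ _ := by
        refine add_le_add (AM_bound hpu hpd hsum hlt hP0 m hm) ?_
        refine le_trans (meas_ge_le_lintegral_div (μ := P0) hmeas.aemeasurable
          (by simp [ht0]) ENNReal.ofReal_ne_top) ?_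
        exact ENNReal.div_le_div_right (lint_htsum hpu hpd hsum hlt hΛ hγ hP0 m) _

include hpu hpd hsum hlt hΛ hγ in
/-- truncated-moment bound for `Zvar`. -/
lemma Zvar_trunc (hP0 : IsLevelChainLaw 1 pu pd (Measure.dirac 0) P0)
    {s : ℝ} (hs : 0 ≤ s) (m : ℕ) (hm : 1 ≤ m) :
    ∫⁻ ω, ENNReal.ofReal (min (Zvar Λ ω) s) ∂P0
      ≤ ENNReal.ofReal s * ENNReal.ofReal (((pd-pu)⁻¹ * (pu/pd)^(m-1)) * (1 - pu/pd)⁻¹)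
        + ENNReal.ofReal (((pd-pu)⁻¹ * Λ^2 / (Λ^2 * (pu/pd) - 1)) * (Λ^2 * (pu/pd))^m) := by
  have hpt : ∀ ω, ENNReal.ofReal (min (Zvar Λ ω) s)
      ≤ (AMset m).indicator (fun _ => ENNReal.ofReal s) ω + ∑' j, ht Λ m j ω := by
    intro ω
    by_cases hA : ω ∈ AMset m
    · rw [Set.indicator_of_mem hA]
      exact le_add_right (ENNReal.ofReal_le_ofReal (min_le_right _ _))
    · rw [Set.indicator_of_notMem hA, zero_add]
      exact le_trans (ENNReal.ofReal_le_ofReal (min_le_left _ _)) (ofReal_Zvar_le hΛ hA)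
  calc ∫⁻ ω, ENNReal.ofReal (min (Zvar Λ ω) s) ∂P0
      ≤ ∫⁻ ω, ((AMset m).indicator (fun _ => ENNReal.ofReal s) ω + ∑' j, ht Λ m j ω) ∂P0 :=
        lintegral_mono hpt
    _ = ENNReal.ofReal s * P0 (AMset m) + ∫⁻ ω, (∑' j, ht Λ m j ω) ∂P0 := by
        rw [lintegral_add_left (measurable_const.indicator (AM_meas m)),
          lintegral_indicator (AM_meas m), setLIntegral_const]
    _ ≤ _ := by
        refine add_le_add (mul_le_mul_right (AM_bound hpu hpd hsum hlt hP0 m hm) _)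
          (lint_htsum hpu hpd hsum hlt hΛ hγ hP0 m)

end Est1

section Meas

lemma tau0_spec_pos {ω : ℕ → ℕ} {t : ℕ} (ht : 1 ≤ t) :
    tau0 ω = t ↔ (ω t = 0 ∧ ∀ i < t, ¬(1 ≤ i ∧ ω i = 0)) := by
  constructor
  · intro h0
    have hne : {k | 1 ≤ k ∧ ω k = 0}.Nonempty := by
      by_contra hc
      rw [Set.not_nonempty_iff_eq_empty] at hc
      rw [tau0, hc, Nat.sInf_empty] at h0
      omega
    have hmem := Nat.sInf_mem hne
    rw [tau0] at h0
    rw [h0] at hmem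
    exact ⟨hmem.2, fun i hi hc => Nat.notMem_of_lt_sInf (h0 ▸ hi) hc⟩
  · rintro ⟨h1, h2⟩
    refine le_antisymm (Nat.sInf_le ⟨ht, h1⟩) ?_
    by_contra hc
    push_neg at hc
    have hne : {k | 1 ≤ k ∧ ω k = 0}.Nonempty := ⟨t, ht, h1⟩
    exact h2 _ hc (Nat.sInf_mem hne)

lemma tau0_meas : Measurable tau0 := by
  apply measurable_to_countable'
  intro t
  rcases Nat.eq_zero_or_pos t with h | h
  · subst h
    have hset : tau0 ⁻¹' {0} = ⋂ j, ⋂ (_ : 1 ≤ j), (fun ω : ℕ → ℕ => ω j) ⁻¹' ({0}ᶜ) := by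
      ext ω
      simp only [Set.mem_preimage, Set.mem_singleton_iff, Set.mem_iInter, Set.mem_compl_iff]
      constructor
      · intro h0 j hj hc
        have hne : {k | 1 ≤ k ∧ ω k = 0}.Nonempty := ⟨j, hj, hc⟩
        have := Nat.sInf_mem hne
        rw [tau0] at h0
        rw [h0] at this
        obtain ⟨h1', h2'⟩ := this
        omega
      · intro hall
        have : {k | 1 ≤ k ∧ ω k = 0} = ∅ := by
          ext k
          simp only [Set.mem_setOf_eq, Set.mem_empty_iff_false, iff_false, not_and]
          exact fun hk => hall k hk
        rw [tau0, this, Nat.sInf_empty]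
    rw [hset]
    exact MeasurableSet.iInter fun j => MeasurableSet.iInter fun _ =>
      (measurable_pi_apply j) (measurableSet_singleton 0).compl
  · have hset : tau0 ⁻¹' {t} =
        ((fun ω : ℕ → ℕ => ω t) ⁻¹' {0}) ∩
          ⋂ i, ⋂ (_ : i < t) (_ : 1 ≤ i), (fun ω : ℕ → ℕ => ω i) ⁻¹' ({0}ᶜ) := by
      ext ω
      simp only [Set.mem_preimage, Set.mem_singleton_iff, Set.mem_inter_iff, Set.mem_iInter,
        Set.mem_compl_iff]
      rw [tau0_spec_pos h]
      constructor
      · rintro ⟨h1, h2⟩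
        exact ⟨h1, fun i hi h1i hc => h2 i hi ⟨h1i, hc⟩⟩
      · rintro ⟨h1, h2⟩
        exact ⟨h1, fun i hi hc => h2 i hi hc.1 hc.2⟩
    rw [hset]
    exact ((measurable_pi_apply t) (measurableSet_singleton 0)).inter
      (MeasurableSet.iInter fun i => MeasurableSet.iInter fun _ =>
        MeasurableSet.iInter fun _ => (measurable_pi_apply i) (measurableSet_singleton 0).compl)

lemma Zvar_meas (Λ : ℝ) : Measurable (Zvar Λ) := by
  have h1 : ∀ t : ℕ, Measurable (fun ω : ℕ → ℕ => ∑ j ∈ Finset.range t, Λ ^ (2 * ω j)) :=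
    fun t => Finset.measurable_sum _ (fun j _ =>
      (Measurable.of_discrete (f := fun x : ℕ => Λ ^ (2*x))).comp (measurable_pi_apply j))
  intro B hB
  have hset : Zvar Λ ⁻¹' B = ⋃ t : ℕ,
      (tau0 ⁻¹' {t} ∩ (fun ω : ℕ → ℕ => ∑ j ∈ Finset.range t, Λ ^ (2 * ω j)) ⁻¹' B) := by
    ext ω
    simp only [Set.mem_preimage, Set.mem_iUnion, Set.mem_inter_iff, Set.mem_singleton_iff]
    constructor
    · intro hω
      exact ⟨tau0 ω, rfl, hω⟩
    · rintro ⟨t, h1', h2⟩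
      rw [Zvar, h1']
      exact h2
  rw [hset]
  exact MeasurableSet.iUnion fun t =>
    (tau0_meas (measurableSet_singleton t)).inter (h1 t hB)

lemma Zvar_nonneg {Λ : ℝ} (hΛ : 0 < Λ) (ω : ℕ → ℕ) : 0 ≤ Zvar Λ ω :=
  Finset.sum_nonneg (fun j _ => by positivity)

end Meas

section QSide

variable {Λ pu pd : ℝ} {P0 : Measure (ℕ → ℕ)}
  {Ω' : Type*} [MeasurableSpace Ω'] {Q : Measure Ω'} {Zs : ℕ → Ω' → ℝ}
  (hΛpos : 0 < Λ)
  (hmeas : ∀ k, Measurable (Zs k))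
  (hdist : ∀ k, Measure.map (Zs k) Q = Measure.map (Zvar Λ) P0)

include hmeas hdist in
lemma Zs_tail (k : ℕ) (t : ℝ) : Q {ω' | t < Zs k ω'} = P0 {ω | t < Zvar Λ ω} := by
  have h1 : {ω' | t < Zs k ω'} = Zs k ⁻¹' (Set.Ioi t) := rfl
  have h2 : {ω | t < Zvar Λ ω} = Zvar Λ ⁻¹' (Set.Ioi t) := rfl
  rw [h1, h2, ← Measure.map_apply (hmeas k) measurableSet_Ioi,
    ← Measure.map_apply (Zvar_meas Λ) measurableSet_Ioi, hdist k]

include hΛpos hmeas hdist in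
lemma Zs_nonneg_ae (k : ℕ) : ∀ᵐ ω' ∂Q, 0 ≤ Zs k ω' := by
  rw [MeasureTheory.ae_iff]
  have h1 : {ω' | ¬ 0 ≤ Zs k ω'} = Zs k ⁻¹' (Set.Iio 0) := by
    ext ω'; simp [Set.mem_setOf_eq, not_le]
  rw [h1, ← Measure.map_apply (hmeas k) measurableSet_Iio, hdist k,
    Measure.map_apply (Zvar_meas Λ) measurableSet_Iio]
  have : Zvar Λ ⁻¹' (Set.Iio 0) = ∅ := by
    ext ω
    simp only [Set.mem_preimage, Set.mem_Iio, Set.mem_empty_iff_false, iff_false, not_lt]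
    exact Zvar_nonneg hΛpos ω
  rw [this, measure_empty]

include hmeas hdist in
lemma Zs_trunc_int (k : ℕ) (s : ℝ) :
    ∫⁻ ω', ENNReal.ofReal (min (Zs k ω') s) ∂Q
      = ∫⁻ ω, ENNReal.ofReal (min (Zvar Λ ω) s) ∂P0 := by
  have hg : Measurable (fun x : ℝ => ENNReal.ofReal (min x s)) :=
    (measurable_id.min measurable_const).ennreal_ofReal
  rw [← lintegral_map hg (hmeas k), ← lintegral_map hg (Zvar_meas Λ), hdist k]

include hΛpos hmeas hdist in
/-- Main estimate for part 1 under `Q`. -/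
lemma Zsum_bound [IsProbabilityMeasure Q] {ε cc tt : ℝ} (hε : 0 < ε) (hcc : 0 ≤ cc)
    (htt : 0 < tt) (n : ℕ) :
    Q {ω' | ε ≤ |cc * ∑ k ∈ Finset.Icc 1 n, Zs k ω'|}
      ≤ (n : ENNReal) * P0 {ω | tt < Zvar Λ ω}
        + ENNReal.ofReal cc * ((n : ENNReal) *
            ∫⁻ ω, ENNReal.ofReal (min (Zvar Λ ω) tt) ∂P0) / ENNReal.ofReal ε := by
  classical
  set G : Ω' → ENNReal :=
    fun ω' => ENNReal.ofReal cc * ∑ k ∈ Finset.Icc 1 n, ENNReal.ofReal (min (Zs k ω') tt)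
    with hG
  set Nset : Set Ω' := ⋃ k ∈ Finset.Icc 1 n, {ω' | ¬ 0 ≤ Zs k ω'} with hN
  have hNnull : Q Nset = 0 := by
    refine le_antisymm (le_trans (measure_biUnion_finset_le _ _) ?_) (zero_le)
    have : ∀ k ∈ Finset.Icc 1 n, Q {ω' | ¬ 0 ≤ Zs k ω'} = 0 := by
      intro k _
      have := Zs_nonneg_ae hΛpos hmeas hdist (P0 := P0) k
      rwa [MeasureTheory.ae_iff] at this
    rw [Finset.sum_congr rfl this, Finset.sum_const, smul_zero]
  have hsub : {ω' | ε ≤ |cc * ∑ k ∈ Finset.Icc 1 n, Zs k ω'|}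
      ⊆ Nset ∪ ((⋃ k ∈ Finset.Icc 1 n, {ω' | tt < Zs k ω'})
        ∪ {ω' | ENNReal.ofReal ε ≤ G ω'}) := by
    intro ω' hω'
    by_cases hNmem : ω' ∈ Nset
    · exact Or.inl hNmem
    · refine Or.inr ?_
      have hpos : ∀ k ∈ Finset.Icc 1 n, 0 ≤ Zs k ω' := by
        intro k hk
        by_contra hc
        exact hNmem (Set.mem_biUnion hk hc)
      by_cases hbig : ∃ k ∈ Finset.Icc 1 n, tt < Zs k ω'
      · obtain ⟨k, hk1, hk2⟩ := hbig
        exact Or.inl (Set.mem_biUnion hk1 hk2)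
      · push_neg at hbig
        refine Or.inr ?_
        have hsmall : ∀ k ∈ Finset.Icc 1 n, min (Zs k ω') tt = Zs k ω' :=
          fun k hk => min_eq_left (hbig k hk)
        have habs : |cc * ∑ k ∈ Finset.Icc 1 n, Zs k ω'|
            = cc * ∑ k ∈ Finset.Icc 1 n, Zs k ω' :=
          abs_of_nonneg (mul_nonneg hcc (Finset.sum_nonneg hpos))
        rw [Set.mem_setOf_eq, habs] at hω'
        calc ENNReal.ofReal ε ≤ ENNReal.ofReal (cc * ∑ k ∈ Finset.Icc 1 n, Zs k ω') :=
              ENNReal.ofReal_le_ofReal hω'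
          _ = ENNReal.ofReal cc * ENNReal.ofReal (∑ k ∈ Finset.Icc 1 n, Zs k ω') :=
              ENNReal.ofReal_mul hcc
          _ = G ω' := by
              rw [hG, ENNReal.ofReal_sum_of_nonneg hpos]
              congr 1
              exact Finset.sum_congr rfl (fun k hk => by rw [hsmall k hk])
  have hGmeas : Measurable G := by
    refine Measurable.const_mul (Finset.measurable_sum _ (fun k _ => ?_)) _
    exact ((hmeas k).min measurable_const).ennreal_ofReal
  calc Q {ω' | ε ≤ |cc * ∑ k ∈ Finset.Icc 1 n, Zs k ω'|}
      ≤ Q (Nset ∪ ((⋃ k ∈ Finset.Icc 1 n, {ω' | tt < Zs k ω'})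
          ∪ {ω' | ENNReal.ofReal ε ≤ G ω'})) := measure_mono hsub
    _ ≤ Q Nset + Q ((⋃ k ∈ Finset.Icc 1 n, {ω' | tt < Zs k ω'})
          ∪ {ω' | ENNReal.ofReal ε ≤ G ω'}) := measure_union_le _ _
    _ ≤ 0 + (Q (⋃ k ∈ Finset.Icc 1 n, {ω' | tt < Zs k ω'})
          + Q {ω' | ENNReal.ofReal ε ≤ G ω'}) := by
        rw [hNnull]
        exact add_le_add le_rfl (measure_union_le _ _)
    _ = Q (⋃ k ∈ Finset.Icc 1 n, {ω' | tt < Zs k ω'})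
          + Q {ω' | ENNReal.ofReal ε ≤ G ω'} := by rw [zero_add]
    _ ≤ (n : ENNReal) * P0 {ω | tt < Zvar Λ ω}
        + ENNReal.ofReal cc * ((n : ENNReal) *
            ∫⁻ ω, ENNReal.ofReal (min (Zvar Λ ω) tt) ∂P0) / ENNReal.ofReal ε := by
        refine add_le_add ?_ ?_
        · refine le_trans (measure_biUnion_finset_le _ _) ?_
          have hcongr : ∀ k ∈ Finset.Icc 1 n,
              Q {ω' | tt < Zs k ω'} = P0 {ω | tt < Zvar Λ ω} :=
            fun k _ => Zs_tail hmeas hdist k tt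
          rw [Finset.sum_congr rfl hcongr, Finset.sum_const, Nat.card_Icc]
          simp [nsmul_eq_mul]
        · refine le_trans (meas_ge_le_lintegral_div (μ := Q) hGmeas.aemeasurable
            (by simp [hε]) ENNReal.ofReal_ne_top) (ENNReal.div_le_div_right ?_ _)
          simp only [hG]
          rw [lintegral_const_mul _ (Finset.measurable_sum _ (fun k _ =>
            ((hmeas k).min measurable_const).ennreal_ofReal))]
          refine mul_le_mul_right (le_of_eq ?_) _
          rw [lintegral_finset_sum _ (fun k _ =>
            ((hmeas k).min measurable_const).ennreal_ofReal)]
          have hcongr : ∀ k ∈ Finset.Icc 1 n,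
              ∫⁻ ω', ENNReal.ofReal (min (Zs k ω') tt) ∂Q
                = ∫⁻ ω, ENNReal.ofReal (min (Zvar Λ ω) tt) ∂P0 :=
            fun k _ => Zs_trunc_int hmeas hdist k tt
          rw [Finset.sum_congr rfl hcongr, Finset.sum_const, Nat.card_Icc]
          simp [nsmul_eq_mul]

end QSide

section Final

variable {Λ pu pd α : ℝ}
  (hpu : 0 < pu) (hpd : 0 < pd) (hsum : pu + pd = 1) (hlt : pu < pd) (hΛ : 1 < Λ)
  (hγ : 1 < Λ^2 * (pu/pd)) (hα : α = Real.log (pd/pu) / Real.log Λ)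

include hpu hpd hlt hΛ hγ hα in
lemma alpha_facts : 0 < α ∧ α < 2 ∧ α * Real.log Λ = Real.log (pd/pu) := by
  have hlogΛ : 0 < Real.log Λ := Real.log_pos hΛ
  have hr1 : 1 < pd/pu := (one_lt_div hpu).mpr hlt
  have hprod : (pu/pd) * (pd/pu) = 1 := by field_simp
  have hr2 : pd/pu < Λ^2 := by nlinarith [div_pos hpd hpu]
  have hlogr : 0 < Real.log (pd/pu) := Real.log_pos hr1
  have hlt2 : Real.log (pd/pu) < 2 * Real.log Λ := by
    have h1 : Real.log (pd/pu) < Real.log (Λ^2) := Real.log_lt_log (by positivity) hr2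
    rwa [Real.log_pow, Nat.cast_ofNat] at h1
  refine ⟨by rw [hα]; positivity, ?_, ?_⟩
  · rw [hα, div_lt_iff₀ hlogΛ]; linarith
  · rw [hα]; field_simp

include hpu hpd hsum hlt hΛ hγ hα in
lemma master_real {C1 C2 ε aa tt : ℝ} (hC1 : 0 ≤ C1) (hC2 : 0 ≤ C2) (hε : 0 < ε)
    (ha0 : 0 < aa) {n : ℕ} (hn : 1 ≤ n)
    (htt1 : 1 ≤ tt) (httval : tt = ε * (n:ℝ)^((2:ℝ)/α) / aa^2)
    {m : ℕ} (hm : m = ⌊Real.log tt / (2*Real.log Λ)⌋₊ + 1) :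
    (n:ℝ) * (C1 * (pu/pd)^(m-1)) + (n:ℝ) * (C2 * (Λ^2*(pu/pd))^m) / tt
      ≤ (C1 * (pu/pd)⁻¹ + C2 * (Λ^2*(pu/pd))) * (ε^(-(α/2)) * aa^α) := by
  obtain ⟨hα0, hα2, hαlog⟩ := alpha_facts hpu hpd hlt hΛ hγ hα
  have hlogΛ : 0 < Real.log Λ := Real.log_pos hΛ
  have hρpos : 0 < pu/pd := by positivity
  have hρ1 : pu/pd < 1 := (div_lt_one hpd).mpr hlt
  have hγpos : (0:ℝ) < Λ^2*(pu/pd) := by positivity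
  have htt0 : (0:ℝ) < tt := by linarith
  have hnpos : (0:ℝ) < (n:ℝ) := by exact_mod_cast hn
  have hlogρ : Real.log (pu/pd) = -(α * Real.log Λ) := by
    rw [hαlog, ← Real.log_inv, inv_div]
  have hlogγ : Real.log (Λ^2*(pu/pd)) = (2 - α) * Real.log Λ := by
    rw [Real.log_mul (by positivity) (by positivity), Real.log_pow, hlogρ, Nat.cast_ofNat]
    ring
  set L := Real.log tt / (2*Real.log Λ) with hL
  have hL0 : 0 ≤ L := by
    have h0 : 0 ≤ Real.log tt := Real.log_nonneg htt1
    rw [hL]; positivity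
  have hfl_le : (⌊L⌋₊ : ℝ) ≤ L := Nat.floor_le hL0
  have hfl_ge : L - 1 ≤ (⌊L⌋₊ : ℝ) := by
    have := Nat.sub_one_lt_floor L
    linarith
  have httL_rho : (pu/pd) ^ (L : ℝ) = tt ^ (-(α/2)) := by
    rw [Real.rpow_def_of_pos hρpos, Real.rpow_def_of_pos htt0, hlogρ, hL]
    congr 1
    field_simp
  have httL_gam : (Λ^2*(pu/pd)) ^ (L : ℝ) = tt ^ ((1:ℝ) - α/2) := by
    rw [Real.rpow_def_of_pos hγpos, Real.rpow_def_of_pos htt0, hlogγ, hL]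
    congr 1
    field_simp
  have hi : (pu/pd)^(m-1) ≤ (pu/pd)⁻¹ * tt ^ (-(α/2)) := by
    have e1 : m - 1 = ⌊L⌋₊ := by omega
    calc (pu/pd)^(m-1) = (pu/pd) ^ ((⌊L⌋₊ : ℝ)) := by
          rw [e1, Real.rpow_natCast]
      _ ≤ (pu/pd) ^ (L - 1) :=
          Real.rpow_le_rpow_of_exponent_ge hρpos hρ1.le hfl_ge
      _ = (pu/pd)⁻¹ * tt ^ (-(α/2)) := by
          rw [Real.rpow_sub hρpos, Real.rpow_one, httL_rho]
          ring
  have hii : (Λ^2*(pu/pd))^m ≤ (Λ^2*(pu/pd)) * (tt * tt ^ (-(α/2))) := by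
    calc (Λ^2*(pu/pd))^m = (Λ^2*(pu/pd)) ^ ((m : ℕ) : ℝ) := by rw [Real.rpow_natCast]
      _ ≤ (Λ^2*(pu/pd)) ^ (L + 1) := by
          apply Real.rpow_le_rpow_of_exponent_le hγ.le
          rw [hm]
          push_cast
          linarith
      _ = (Λ^2*(pu/pd)) * (tt * tt ^ (-(α/2))) := by
          rw [Real.rpow_add hγpos, Real.rpow_one, httL_gam]
          have e2 : (1:ℝ) - α/2 = 1 + (-(α/2)) := by ring
          rw [e2, Real.rpow_add htt0, Real.rpow_one]
          ring
  have hkey : (n:ℝ) * tt ^ (-(α/2)) = ε^(-(α/2)) * aa^α := by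
    have hXpos : (0:ℝ) < (n:ℝ)^((2:ℝ)/α) := Real.rpow_pos_of_pos hnpos _
    have h1 : tt ^ (-(α/2))
        = (ε^(-(α/2)) * ((n:ℝ)^((2:ℝ)/α))^(-(α/2))) / (aa^2)^(-(α/2)) := by
      rw [httval, Real.div_rpow (by positivity) (by positivity),
        Real.mul_rpow hε.le (by positivity)]
    have h2 : ((n:ℝ)^((2:ℝ)/α))^(-(α/2)) = ((n:ℝ))⁻¹ := by
      rw [← Real.rpow_mul hnpos.le]
      have e : (2/α) * (-(α/2)) = -1 := by field_simp
      rw [e, Real.rpow_neg_one]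
    have h3 : (aa^2)^(-(α/2)) = (aa^α)⁻¹ := by
      rw [← Real.rpow_natCast aa 2, ← Real.rpow_mul ha0.le,
        ← Real.rpow_neg_one (aa ^ α), ← Real.rpow_mul ha0.le]
      congr 1
      push_cast
      ring
    rw [h1, h2, h3]
    have haα : (0:ℝ) < aa^α := Real.rpow_pos_of_pos ha0 _
    field_simp
  have hstep1 : (n:ℝ) * (C1 * (pu/pd)^(m-1)) ≤ C1 * (pu/pd)⁻¹ * ((n:ℝ) * tt^(-(α/2))) := by
    calc (n:ℝ) * (C1 * (pu/pd)^(m-1))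
        ≤ (n:ℝ) * (C1 * ((pu/pd)⁻¹ * tt^(-(α/2)))) :=
          mul_le_mul_of_nonneg_left (mul_le_mul_of_nonneg_left hi hC1) hnpos.le
      _ = C1 * (pu/pd)⁻¹ * ((n:ℝ) * tt^(-(α/2))) := by ring
  have hstep2 : (n:ℝ) * (C2 * (Λ^2*(pu/pd))^m) / tt
      ≤ C2 * (Λ^2*(pu/pd)) * ((n:ℝ) * tt^(-(α/2))) := by
    rw [div_le_iff₀ htt0]
    calc (n:ℝ) * (C2 * (Λ^2*(pu/pd))^m)
        ≤ (n:ℝ) * (C2 * ((Λ^2*(pu/pd)) * (tt * tt^(-(α/2))))) :=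
          mul_le_mul_of_nonneg_left (mul_le_mul_of_nonneg_left hii hC2) hnpos.le
      _ = C2 * (Λ^2*(pu/pd)) * ((n:ℝ) * tt^(-(α/2))) * tt := by ring
  calc (n:ℝ) * (C1 * (pu/pd)^(m-1)) + (n:ℝ) * (C2 * (Λ^2*(pu/pd))^m) / tt
      ≤ C1 * (pu/pd)⁻¹ * ((n:ℝ) * tt^(-(α/2)))
        + C2 * (Λ^2*(pu/pd)) * ((n:ℝ) * tt^(-(α/2))) := add_le_add hstep1 hstep2
    _ = (C1 * (pu/pd)⁻¹ + C2 * (Λ^2*(pu/pd))) * ((n:ℝ) * tt^(-(α/2))) := by ring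
    _ = _ := by rw [hkey]

end Final

lemma collapse2 {cc ε : ℝ} (hcc : 0 ≤ cc) (hε : 0 < ε) {A B : ℝ} (hA : 0 ≤ A) (hB : 0 ≤ B)
    (n : ℕ) :
    (n : ENNReal) * ENNReal.ofReal A
      + ENNReal.ofReal cc * ((n : ENNReal) * ENNReal.ofReal B) / ENNReal.ofReal ε
    = ENNReal.ofReal ((n:ℝ) * A + cc * ((n:ℝ) * B) / ε) := by
  rw [← ENNReal.ofReal_natCast n,
    ← ENNReal.ofReal_mul (by positivity : (0:ℝ) ≤ (n:ℝ)),
    ← ENNReal.ofReal_mul (by positivity : (0:ℝ) ≤ (n:ℝ)),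
    ← ENNReal.ofReal_mul hcc,
    ← ENNReal.ofReal_div_of_pos hε,
    ← ENNReal.ofReal_add (by positivity) (by positivity)]

end Exc

/-- Corollary `biggamma`.  For i.i.d. copies `(Z_k)_{k≥1}` of `Z` and any
positive sequence `a_n → 0`, both `(a_n²/n^{2/α}) Σ_{k=1}^n Z_k → 0` and
`(a_n²/n^{2/α}) V_n → 0` in probability. -/
theorem rescaled_Zsum_and_Vn_tendsto_zero (Λ pu pd α : ℝ) (hΛ : 1 < Λ)
    (hpu : 0 < pu) (hpd : 0 < pd) (hpu1 : pu < 1) (hpd1 : pd < 1) (hsum : pu + pd = 1)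
    (hratio1 : 1 < pd / pu) (hratio2 : pd / pu < Λ ^ 2)
    (hα : α = Real.log (pd / pu) / Real.log Λ)
    (P0 : Measure (ℕ → ℕ)) [IsProbabilityMeasure P0]
    (hP0 : IsLevelChainLaw 1 pu pd (Measure.dirac 0) P0)
    {Ω' : Type*} [MeasurableSpace Ω'] (Q : Measure Ω') [IsProbabilityMeasure Q]
    (Zs : ℕ → Ω' → ℝ) (hmeas : ∀ k, Measurable (Zs k))
    (hindep : ProbabilityTheory.iIndepFun Zs Q)
    (hdist : ∀ k, Measure.map (Zs k) Q = Measure.map (Zvar Λ) P0)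
    (a : ℕ → ℝ) (hapos : ∀ n, 0 < a n) (ha : Tendsto a atTop (𝓝 (0 : ℝ))) :
    TendstoInMeasure Q
      (fun (n : ℕ) ω' => (a n) ^ 2 / (n : ℝ) ^ (2 / α) * ∑ k ∈ Finset.Icc 1 n, Zs k ω')
      atTop (fun _ => (0 : ℝ)) ∧
    TendstoInMeasure P0
      (fun (n : ℕ) ω => (a n) ^ 2 / (n : ℝ) ^ (2 / α) * Vvar Λ n ω)
      atTop (fun _ => (0 : ℝ)) := by
  have hlt : pu < pd := by
    have := (one_lt_div hpu).mp hratio1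
    linarith
  have hΛpos : (0:ℝ) < Λ := by linarith
  have hγ : 1 < Λ^2 * (pu/pd) := by
    have hprod : (pd/pu) * (pu/pd) = 1 := by field_simp
    nlinarith [div_pos hpu hpd]
  obtain ⟨hα0, hα2, hαlog⟩ := Exc.alpha_facts hpu hpd hlt hΛ hγ hα
  have hpdpu : (0:ℝ) < pd - pu := by linarith
  have hρ1 : pu/pd < 1 := (div_lt_one hpd).mpr hlt
  have h1ρ : (0:ℝ) < 1 - pu/pd := by linarith
  have hγ1 : (0:ℝ) < Λ^2*(pu/pd) - 1 := by linarith
  -- limit of a n ^ α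
  have haα : Tendsto (fun n => (a n)^α) atTop (𝓝 (0:ℝ)) := by
    have hc : ContinuousAt (fun x : ℝ => x ^ α) 0 :=
      Real.continuousAt_rpow_const 0 α (Or.inr hα0.le)
    have := hc.tendsto.comp ha
    rwa [Function.comp_def, Real.zero_rpow hα0.ne'] at this
  have hXto : Tendsto (fun n : ℕ => (n:ℝ)^((2:ℝ)/α)) atTop atTop :=
    (tendsto_rpow_atTop (by positivity)).comp tendsto_natCast_atTop_atTop
  have ha1 : ∀ᶠ n in atTop, a n ≤ 1 :=
    (ha.eventually_lt_const one_pos).mono (fun n h => h.le)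
  rw [tendstoInMeasure_iff_dist, tendstoInMeasure_iff_dist]
  constructor
  · -- part 1
    intro ε hε
    set C1 : ℝ := 2*((pd-pu)⁻¹ * (1 - pu/pd)⁻¹) with hC1def
    set C2 : ℝ := 2*((pd-pu)⁻¹ * Λ^2 / (Λ^2*(pu/pd) - 1)) with hC2def
    set K : ℝ := (C1 * (pu/pd)⁻¹ + C2*(Λ^2*(pu/pd))) * ε^(-(α/2)) with hKdef
    have hC1p : 0 ≤ C1 := by rw [hC1def]; positivity
    have hC2p : 0 ≤ C2 := by rw [hC2def]; positivity
    have hKto : Tendsto (fun n => ENNReal.ofReal (K * a n ^ α)) atTop (𝓝 0) := by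
      have h2 : Tendsto (fun n => K * a n ^ α) atTop (𝓝 (0:ℝ)) := by
        simpa using haα.const_mul K
      simpa using ENNReal.tendsto_ofReal h2
    refine tendsto_of_tendsto_of_tendsto_of_le_of_le' tendsto_const_nhds hKto
      (Filter.Eventually.of_forall (fun n => zero_le)) ?_
    filter_upwards [eventually_ge_atTop 1, ha1,
      hXto.eventually_ge_atTop (1/ε)] with n hn han hXn
    -- setup
    set cc : ℝ := a n ^ 2 / (n:ℝ) ^ ((2:ℝ) / α) with hccdef
    have hXpos : (0:ℝ) < (n:ℝ)^((2:ℝ)/α) :=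
      Real.rpow_pos_of_pos (by exact_mod_cast hn) _
    have hcc0 : 0 < cc := div_pos (pow_pos (hapos n) 2) hXpos
    set tt : ℝ := ε / cc with httdef
    have htt0 : 0 < tt := div_pos hε hcc0
    have httval : tt = ε * (n:ℝ)^((2:ℝ)/α) / a n ^ 2 := by
      rw [httdef, hccdef, div_div_eq_mul_div]
    have htt1 : 1 ≤ tt := by
      rw [httval]
      rw [le_div_iff₀ (pow_pos (hapos n) 2), one_mul]
      have h1 : a n ^ 2 ≤ 1 := pow_le_one₀ (hapos n).le han
      have h2 : (1:ℝ) ≤ ε * (n:ℝ)^((2:ℝ)/α) := by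
        rw [div_le_iff₀ hε] at hXn
        calc (1:ℝ) ≤ (n:ℝ)^((2:ℝ)/α) * ε := hXn
          _ = ε * (n:ℝ)^((2:ℝ)/α) := mul_comm _ _
      linarith
    set m : ℕ := ⌊Real.log tt / (2*Real.log Λ)⌋₊ + 1 with hmdef
    have hm1 : 1 ≤ m := by omega
    set A1 : ℝ := ((pd-pu)⁻¹ * (pu/pd)^(m-1)) * (1 - pu/pd)⁻¹ with hA1def
    set B1 : ℝ := ((pd-pu)⁻¹ * Λ^2 / (Λ^2 * (pu/pd) - 1)) * (Λ^2 * (pu/pd))^m with hB1def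
    have hA1p : 0 ≤ A1 := by rw [hA1def]; positivity
    have hB1p : 0 ≤ B1 := by rw [hB1def]; positivity
    have hset : {ω' | ε ≤ dist (a n ^ 2 / (n:ℝ) ^ (2 / α) * ∑ k ∈ Finset.Icc 1 n, Zs k ω') 0}
        = {ω' | ε ≤ |cc * ∑ k ∈ Finset.Icc 1 n, Zs k ω'|} := by
      simp only [Real.dist_0_eq_abs, hccdef]
    rw [hset]
    calc Q {ω' | ε ≤ |cc * ∑ k ∈ Finset.Icc 1 n, Zs k ω'|}
        ≤ (n : ENNReal) * P0 {ω | tt < Zvar Λ ω}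
          + ENNReal.ofReal cc * ((n : ENNReal) *
              ∫⁻ ω, ENNReal.ofReal (min (Zvar Λ ω) tt) ∂P0) / ENNReal.ofReal ε :=
          Exc.Zsum_bound hΛpos hmeas hdist hε hcc0.le htt0 n
      _ ≤ (n : ENNReal) * ENNReal.ofReal (A1 + B1 / tt)
          + ENNReal.ofReal cc * ((n : ENNReal) *
              ENNReal.ofReal (tt * A1 + B1)) / ENNReal.ofReal ε := by
          refine add_le_add (mul_le_mul_right ?_ _)
            (ENNReal.div_le_div_right (mul_le_mul_right (mul_le_mul_right ?_ _) _) _)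
          · refine le_trans (Exc.Zvar_tail hpu hpd hsum hlt hΛ hγ hP0 htt0 m hm1) ?_
            rw [← ENNReal.ofReal_div_of_pos htt0,
              ← ENNReal.ofReal_add hA1p (by positivity)]
          · refine le_trans (Exc.Zvar_trunc hpu hpd hsum hlt hΛ hγ hP0 htt0.le m hm1) ?_
            rw [← ENNReal.ofReal_mul htt0.le,
              ← ENNReal.ofReal_add (by positivity) hB1p]
      _ = ENNReal.ofReal ((n:ℝ) * (A1 + B1/tt) + cc * ((n:ℝ) * (tt*A1 + B1)) / ε) :=
          Exc.collapse2 hcc0.le hε (by positivity) (by positivity) n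
      _ ≤ ENNReal.ofReal (K * a n ^ α) := by
          refine ENNReal.ofReal_le_ofReal ?_
          have hccval : cc * tt = ε := by
            rw [httdef, mul_div_cancel₀ _ (ne_of_gt hcc0)]
          have htt_ne : tt ≠ 0 := ne_of_gt htt0
          have halg : ∀ x y : ℝ, (n:ℝ)*(x + y/tt) + ((n:ℝ)*(tt*x+y))/tt
              = (n:ℝ)*(2*x) + (n:ℝ)*(2*y)/tt := by
            intro x y
            field_simp
            ring
          have hreal_eq : (n:ℝ) * (A1 + B1/tt) + cc * ((n:ℝ) * (tt*A1 + B1)) / ε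
              = (n:ℝ) * (C1 * (pu/pd)^(m-1)) + (n:ℝ) * (C2 * (Λ^2*(pu/pd))^m) / tt := by
            rw [← hccval, mul_div_mul_left _ _ (ne_of_gt hcc0)]
            have e1 : C1 * (pu/pd)^(m-1) = 2*A1 := by rw [hA1def, hC1def]; ring
            have e2 : C2 * (Λ^2*(pu/pd))^m = 2*B1 := by rw [hB1def, hC2def]; ring
            rw [e1, e2]
            exact halg A1 B1
          rw [hreal_eq, hKdef]
          calc (n:ℝ) * (C1 * (pu/pd)^(m-1)) + (n:ℝ) * (C2 * (Λ^2*(pu/pd))^m) / tt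
              ≤ (C1 * (pu/pd)⁻¹ + C2 * (Λ^2*(pu/pd))) * (ε^(-(α/2)) * a n ^ α) :=
                Exc.master_real hpu hpd hsum hlt hΛ hγ hα hC1p hC2p hε (hapos n) hn
                  htt1 httval hmdef
            _ = (C1 * (pu/pd)⁻¹ + C2*(Λ^2*(pu/pd))) * ε^(-(α/2)) * a n ^ α := by ring
  · -- part 2
    intro ε hε
    set C1 : ℝ := pd⁻¹ * (1 - pu/pd)⁻¹ with hC1def
    set C2 : ℝ := pd⁻¹ * Λ^2 / (Λ^2*(pu/pd) - 1) with hC2def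
    set K : ℝ := (C1 * (pu/pd)⁻¹ + C2*(Λ^2*(pu/pd))) * ε^(-(α/2)) with hKdef
    have hC1p : 0 ≤ C1 := by rw [hC1def]; positivity
    have hC2p : 0 ≤ C2 := by rw [hC2def]; positivity
    have hKto : Tendsto (fun n => ENNReal.ofReal (K * a n ^ α)) atTop (𝓝 0) := by
      have h2 : Tendsto (fun n => K * a n ^ α) atTop (𝓝 (0:ℝ)) := by
        simpa using haα.const_mul K
      simpa using ENNReal.tendsto_ofReal h2
    refine tendsto_of_tendsto_of_tendsto_of_le_of_le' tendsto_const_nhds hKto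
      (Filter.Eventually.of_forall (fun n => zero_le)) ?_
    filter_upwards [eventually_ge_atTop 1, ha1,
      hXto.eventually_ge_atTop (1/ε)] with n hn han hXn
    set cc : ℝ := a n ^ 2 / (n:ℝ) ^ ((2:ℝ) / α) with hccdef
    have hXpos : (0:ℝ) < (n:ℝ)^((2:ℝ)/α) :=
      Real.rpow_pos_of_pos (by exact_mod_cast hn) _
    have hcc0 : 0 < cc := div_pos (pow_pos (hapos n) 2) hXpos
    set tt : ℝ := ε / cc with httdef
    have htt0 : 0 < tt := div_pos hε hcc0
    have httval : tt = ε * (n:ℝ)^((2:ℝ)/α) / a n ^ 2 := by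
      rw [httdef, hccdef, div_div_eq_mul_div]
    have htt1 : 1 ≤ tt := by
      rw [httval]
      rw [le_div_iff₀ (pow_pos (hapos n) 2), one_mul]
      have h1 : a n ^ 2 ≤ 1 := pow_le_one₀ (hapos n).le han
      have h2 : (1:ℝ) ≤ ε * (n:ℝ)^((2:ℝ)/α) := by
        rw [div_le_iff₀ hε] at hXn
        calc (1:ℝ) ≤ (n:ℝ)^((2:ℝ)/α) * ε := hXn
          _ = ε * (n:ℝ)^((2:ℝ)/α) := mul_comm _ _
      linarith
    set m : ℕ := ⌊Real.log tt / (2*Real.log Λ)⌋₊ + 1 with hmdef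
    have hm1 : 1 ≤ m := by omega
    have hset : {ω | ε ≤ dist (a n ^ 2 / (n:ℝ) ^ (2 / α) * Vvar Λ n ω) 0}
        = {ω | ε ≤ cc * Vvar Λ n ω} := by
      have hV : ∀ ω, 0 ≤ Vvar Λ n ω :=
        fun ω => Finset.sum_nonneg (fun j _ => by positivity)
      ext ω
      rw [Set.mem_setOf_eq, Set.mem_setOf_eq, Real.dist_0_eq_abs,
        abs_of_nonneg (mul_nonneg hcc0.le (hV ω))]
    rw [hset]
    calc P0 {ω | ε ≤ cc * Vvar Λ n ω}
        ≤ (n : ENNReal) * ENNReal.ofReal ((pd⁻¹ * (pu/pd)^(m-1)) * (1 - pu/pd)⁻¹)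
          + ENNReal.ofReal cc * ((n : ENNReal) *
              ENNReal.ofReal ((pd⁻¹ * Λ^2 / (Λ^2 * (pu/pd) - 1)) * (Λ^2 * (pu/pd))^m))
            / ENNReal.ofReal ε :=
          Exc.Vvar_bound hpu hpd hsum hlt hΛ hγ hP0 hε hcc0.le n m hm1
      _ = ENNReal.ofReal ((n:ℝ) * ((pd⁻¹ * (pu/pd)^(m-1)) * (1 - pu/pd)⁻¹)
            + cc * ((n:ℝ) * ((pd⁻¹ * Λ^2 / (Λ^2 * (pu/pd) - 1)) * (Λ^2 * (pu/pd))^m)) / ε) :=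
          Exc.collapse2 hcc0.le hε (by positivity) (by positivity) n
      _ ≤ ENNReal.ofReal (K * a n ^ α) := by
          refine ENNReal.ofReal_le_ofReal ?_
          have hccval : cc * tt = ε := by
            rw [httdef, mul_div_cancel₀ _ (ne_of_gt hcc0)]
          have hreal_eq : (n:ℝ) * ((pd⁻¹ * (pu/pd)^(m-1)) * (1 - pu/pd)⁻¹)
              + cc * ((n:ℝ) * ((pd⁻¹ * Λ^2 / (Λ^2 * (pu/pd) - 1)) * (Λ^2 * (pu/pd))^m)) / ε
              = (n:ℝ) * (C1 * (pu/pd)^(m-1)) + (n:ℝ) * (C2 * (Λ^2*(pu/pd))^m) / tt := by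
            rw [← hccval, mul_div_mul_left _ _ (ne_of_gt hcc0)]
            have e1 : C1 * (pu/pd)^(m-1) = (pd⁻¹ * (pu/pd)^(m-1)) * (1 - pu/pd)⁻¹ := by
              rw [hC1def]; ring
            have e2 : C2 * (Λ^2*(pu/pd))^m
                = (pd⁻¹ * Λ^2 / (Λ^2 * (pu/pd) - 1)) * (Λ^2 * (pu/pd))^m := by
              rw [hC2def]
            rw [e1, e2]
          rw [hreal_eq, hKdef]
          calc (n:ℝ) * (C1 * (pu/pd)^(m-1)) + (n:ℝ) * (C2 * (Λ^2*(pu/pd))^m) / tt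
              ≤ (C1 * (pu/pd)⁻¹ + C2 * (Λ^2*(pu/pd))) * (ε^(-(α/2)) * a n ^ α) :=
                Exc.master_real hpu hpd hsum hlt hΛ hγ hα hC1p hC2p hε (hapos n) hn
                  htt1 httval hmdef
            _ = (C1 * (pu/pd)⁻¹ + C2*(Λ^2*(pu/pd))) * ε^(-(α/2)) * a n ^ α := by ring
end
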